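/- arXiv:2209.04243 — 7 statements merged into one kernel-verified Lean document; each statement's English description precedes it below -/
import Mathlib

section
/- Let p be a prime, f : F_p^n → ℂ, S ⊆ [n], and x ∈ F_p^S. Suppose that I_{T,x_T}[f] ≤ ε for all subsets T ⊆ S. Then ‖f_{S→x}‖₂² ≤ 2^{2|S|} ε. -/
open Finset

noncomputable def chi (p n : ℕ) [NeZero p] (γ x : Fin n → ZMod p) : ℂ :=
  Complex.exp (2 * (Real.pi : ℂ) * Complex.I * (((∑ i, γ i * x i : ZMod p)).val : ℂ) / (p : ℂ))

noncomputable def Ex (p n : ℕ) [NeZero p] (f : (Fin n → ZMod p) → ℂ) : ℂ :=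
  (∑ x : Fin n → ZMod p, f x) / (Fintype.card (Fin n → ZMod p) : ℂ)

noncomputable def fhat (p n : ℕ) [NeZero p] (f : (Fin n → ZMod p) → ℂ) (γ : Fin n → ZMod p) : ℂ :=
  Ex p n (fun x => f x * (starRingEnd ℂ) (chi p n γ x))

def combine (p n : ℕ) [NeZero p] (S : Finset (Fin n)) (x : {i // i ∈ S} → ZMod p)
    (y : Fin n → ZMod p) : Fin n → ZMod p :=
  fun i => if h : i ∈ S then x ⟨i, h⟩ else y i

noncomputable def ET (p n : ℕ) [NeZero p] (T : Finset (Fin n)) (f : (Fin n → ZMod p) → ℂ) :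
    (Fin n → ZMod p) → ℂ :=
  fun z => (∑ y : {i // i ∈ T} → ZMod p, f (combine p n T y z)) /
    (Fintype.card ({i // i ∈ T} → ZMod p) : ℂ)

noncomputable def LS (p n : ℕ) [NeZero p] (S : Finset (Fin n)) (f : (Fin n → ZMod p) → ℂ) :
    (Fin n → ZMod p) → ℂ :=
  fun z => ∑ T ∈ S.powerset, (-1 : ℂ) ^ T.card * ET p n T f z

noncomputable def DD (p n : ℕ) [NeZero p] (S : Finset (Fin n)) (x : {i // i ∈ S} → ZMod p)
    (f : (Fin n → ZMod p) → ℂ) : (Fin n → ZMod p) → ℂ :=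
  fun z => LS p n S f (combine p n S x z)

noncomputable def N2 (p n : ℕ) [NeZero p] (f : (Fin n → ZMod p) → ℂ) : ℝ :=
  (∑ x : Fin n → ZMod p, ‖f x‖ ^ 2) / (Fintype.card (Fin n → ZMod p) : ℝ)

section Aux
variable (p n : ℕ) [NeZero p]
variable (p n : ℕ) [NeZero p]

def unionEquiv {A B : Finset (Fin n)} (hd : Disjoint A B) :
    (({i // i ∈ A} → ZMod p) × ({i // i ∈ B} → ZMod p)) ≃ ({i // i ∈ A ∪ B} → ZMod p) where
  toFun yw i := if h : i.1 ∈ A then yw.1 ⟨i.1, h⟩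
    else yw.2 ⟨i.1, (Finset.mem_union.mp i.2).resolve_left h⟩
  invFun u := (fun i => u ⟨i.1, Finset.mem_union_left _ i.2⟩,
    fun i => u ⟨i.1, Finset.mem_union_right _ i.2⟩)
  left_inv yw := by
    apply Prod.ext <;> funext i
    · exact dif_pos i.2
    · exact dif_neg (fun hA => Finset.disjoint_left.mp hd hA i.2)
  right_inv u := by
    funext i
    by_cases h : i.1 ∈ A <;> simp [h]

lemma combine_combine {A B : Finset (Fin n)} (hd : Disjoint A B) (y w v) :
    combine p n B w (combine p n A y v)
      = combine p n (A ∪ B) (unionEquiv p n hd (y, w)) v := by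
  funext i
  by_cases hB : i ∈ B
  · have hA : i ∉ A := fun hA => Finset.disjoint_left.mp hd hA hB
    simp [combine, unionEquiv, hA, hB]
  · by_cases hA : i ∈ A <;> simp [combine, unionEquiv, hA, hB]

lemma ET_union {A B : Finset (Fin n)} (hd : Disjoint A B) (g) (v) :
    ET p n A (ET p n B g) v = ET p n (A ∪ B) g v := by
  have hcard : Fintype.card ({i // i ∈ A} → ZMod p) * Fintype.card ({i // i ∈ B} → ZMod p)
      = Fintype.card ({i // i ∈ A ∪ B} → ZMod p) := by
    rw [← Fintype.card_prod]
    exact Fintype.card_congr (unionEquiv p n hd)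
  simp only [ET]
  rw [← Finset.sum_div, div_div]
  simp only [combine_combine p n hd]
  rw [← Fintype.sum_prod_type']
  simp only [Prod.mk.eta]
  rw [Equiv.sum_comp (unionEquiv p n hd) (fun u => g (combine p n (A ∪ B) u v))]
  rw [← Nat.cast_mul, mul_comm, hcard]

lemma ET_empty (g : (Fin n → ZMod p) → ℂ) (v) : ET p n (∅ : Finset (Fin n)) g v = g v := by
  haveI : IsEmpty {i : Fin n // i ∈ (∅ : Finset (Fin n))} :=
    ⟨fun i => Finset.notMem_empty _ i.2⟩
  have h1 : ∀ y : {i : Fin n // i ∈ (∅ : Finset (Fin n))} → ZMod p,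
      combine p n ∅ y v = v := by
    intro y; funext i; exact dif_neg (Finset.notMem_empty i)
  simp [ET, h1]

lemma ET_fun_sum {ι : Type*} (s : Finset ι) (F : ι → (Fin n → ZMod p) → ℂ) (A) (v) :
    ET p n A (fun z => ∑ i ∈ s, F i z) v = ∑ i ∈ s, ET p n A (F i) v := by
  simp only [ET]
  rw [Finset.sum_comm, Finset.sum_div]

lemma ET_smul (c : ℂ) (F : (Fin n → ZMod p) → ℂ) (A) (v) :
    ET p n A (fun z => c * F z) v = c * ET p n A F v := by
  simp only [ET]
  rw [← Finset.mul_sum, mul_div_assoc]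

lemma ET_sub (F G : (Fin n → ZMod p) → ℂ) (A) (v) :
    ET p n A (fun z => F z - G z) v = ET p n A F v - ET p n A G v := by
  simp only [ET]
  rw [Finset.sum_sub_distrib, sub_div]

lemma ET_LS_comm {a : Fin n} {T : Finset (Fin n)} (ha : a ∉ T) (f) :
    ET p n {a} (LS p n T f) = LS p n T (ET p n {a} f) := by
  funext z
  show ET p n {a} (fun w => ∑ R ∈ T.powerset, (-1:ℂ) ^ R.card * ET p n R f w) z = _
  simp only [LS]
  rw [ET_fun_sum]
  refine Finset.sum_congr rfl fun R hR => ?_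
  have haR : a ∉ R := fun h => ha (Finset.mem_powerset.mp hR h)
  have hd : Disjoint R {a} := Finset.disjoint_singleton_right.mpr haR
  rw [ET_smul]
  congr 1
  rw [ET_union p n hd.symm, ET_union p n hd, Finset.union_comm]

lemma LS_insert {a : Fin n} {T : Finset (Fin n)} (ha : a ∉ T) (f) (z) :
    LS p n (insert a T) f z = LS p n T f z - LS p n T (ET p n {a} f) z := by
  simp only [LS]
  rw [Finset.sum_powerset_insert ha]
  have h1 : ∀ R ∈ T.powerset, (-1:ℂ) ^ (insert a R).card * ET p n (insert a R) f z
      = -((-1:ℂ) ^ R.card * ET p n R (ET p n {a} f) z) := by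
    intro R hR
    have haR : a ∉ R := fun h => ha (Finset.mem_powerset.mp hR h)
    have hd : Disjoint R {a} := Finset.disjoint_singleton_right.mpr haR
    rw [Finset.card_insert_of_notMem haR, pow_succ, ET_union p n hd, Finset.union_comm,
      ← Finset.insert_eq]
    ring
  rw [Finset.sum_congr rfl h1, Finset.sum_neg_distrib, ← sub_eq_add_neg]

lemma key (S : Finset (Fin n)) : ∀ (f : (Fin n → ZMod p) → ℂ) (v : Fin n → ZMod p),
    ∑ T ∈ S.powerset, ET p n (S \ T) (LS p n T f) v = f v := by
  classical
  induction S using Finset.induction_on with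
  | empty =>
    intro f v
    rw [Finset.powerset_empty, Finset.sum_singleton, Finset.sdiff_empty]
    have : LS p n ∅ f = fun z => f z := by
      funext z
      simp only [LS, Finset.powerset_empty, Finset.sum_singleton, Finset.card_empty, pow_zero,
        one_mul]
      rw [ET_empty]
    rw [this, ET_empty]
  | @insert a s ha IH =>
    intro f v
    rw [Finset.sum_powerset_insert ha]
    have h1 : ∀ T ∈ s.powerset, ET p n (insert a s \ T) (LS p n T f) v
        = ET p n (s \ T) (LS p n T (ET p n {a} f)) v := by
      intro T hT
      have haT : a ∉ T := fun hh => ha (Finset.mem_powerset.mp hT hh)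
      have haS : a ∉ s \ T := fun hh => ha (Finset.mem_sdiff.mp hh).1
      have hd : Disjoint (s \ T) {a} := Finset.disjoint_singleton_right.mpr haS
      rw [Finset.insert_sdiff_of_notMem _ haT, Finset.insert_eq, Finset.union_comm,
        ← ET_union p n hd, ET_LS_comm p n haT]
    have h2 : ∀ T ∈ s.powerset, ET p n (insert a s \ insert a T) (LS p n (insert a T) f) v
        = ET p n (s \ T) (LS p n T f) v - ET p n (s \ T) (LS p n T (ET p n {a} f)) v := by
      intro T hT
      have haT : a ∉ T := fun hh => ha (Finset.mem_powerset.mp hT hh)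
      have hset : insert a s \ insert a T = s \ T := by
        ext i
        simp only [Finset.mem_sdiff, Finset.mem_insert]
        constructor
        · rintro ⟨hi | hi, hni⟩
          · exact absurd (Or.inl hi) hni
          · exact ⟨hi, fun hh => hni (Or.inr hh)⟩
        · rintro ⟨hi, hni⟩
          exact ⟨Or.inr hi, fun hh => hh.elim (fun he => ha (he ▸ hi)) hni⟩
      have hLS : LS p n (insert a T) f
          = fun z => LS p n T f z - LS p n T (ET p n {a} f) z :=
        funext fun z => LS_insert p n haT f z
      rw [hset, hLS, ET_sub]
    rw [Finset.sum_congr rfl h1, Finset.sum_congr rfl h2, ← Finset.sum_add_distrib]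
    have h3 : ∀ T ∈ s.powerset,
        ET p n (s \ T) (LS p n T (ET p n {a} f)) v
          + (ET p n (s \ T) (LS p n T f) v - ET p n (s \ T) (LS p n T (ET p n {a} f)) v)
        = ET p n (s \ T) (LS p n T f) v := fun T _ => by ring
    rw [Finset.sum_congr rfl h3, IH]

lemma N2_nonneg (f) : 0 ≤ N2 p n f := by
  apply div_nonneg
  · exact Finset.sum_nonneg fun x _ => by positivity
  · positivity

lemma sum_combine (A : Finset (Fin n)) (F : (Fin n → ZMod p) → ℝ) :
    ∑ y : {i // i ∈ A} → ZMod p, ∑ z : Fin n → ZMod p, F (combine p n A y z)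
      = (Fintype.card ({i // i ∈ A} → ZMod p) : ℝ) * ∑ w, F w := by
  classical
  set e := Equiv.piEquivPiSubtypeProd (fun i : Fin n => i ∈ A) (fun _ => ZMod p) with he
  have hc : ∀ (y : {i // i ∈ A} → ZMod p) (q : ({i // i ∈ A} → ZMod p) ×
      ({i // ¬ i ∈ A} → ZMod p)), combine p n A y (e.symm q) = e.symm (y, q.2) := by
    intro y q
    funext i
    by_cases hA : i ∈ A <;>
      simp [combine, he, Equiv.piEquivPiSubtypeProd, hA]
  have h1 : ∀ y : {i // i ∈ A} → ZMod p,
      ∑ z : Fin n → ZMod p, F (combine p n A y z)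
        = (Fintype.card ({i // i ∈ A} → ZMod p) : ℝ)
            * ∑ q2 : {i // ¬ i ∈ A} → ZMod p, F (e.symm (y, q2)) := by
    intro y
    rw [← Equiv.sum_comp e.symm (fun z => F (combine p n A y z))]
    simp only [hc]
    rw [Fintype.sum_prod_type]
    simp only [Prod.snd]
    rw [Finset.sum_const, Finset.card_univ, nsmul_eq_mul]
  rw [Finset.sum_congr rfl fun y _ => h1 y, ← Finset.mul_sum]
  congr 1
  rw [← Fintype.sum_prod_type']
  exact Equiv.sum_comp e.symm F

lemma N2_ET_le (A : Finset (Fin n)) (g) : N2 p n (ET p n A g) ≤ N2 p n g := by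
  have hZ : Nonempty (ZMod p) := ⟨0⟩
  have hcA : (0:ℝ) < (Fintype.card ({i // i ∈ A} → ZMod p) : ℝ) := by
    exact_mod_cast Fintype.card_pos
  have hcV : (0:ℝ) < (Fintype.card (Fin n → ZMod p) : ℝ) := by
    exact_mod_cast Fintype.card_pos
  set cA := (Fintype.card ({i // i ∈ A} → ZMod p) : ℝ) with hcAdef
  have point : ∀ z, ‖ET p n A g z‖ ^ 2
      ≤ (∑ y : {i // i ∈ A} → ZMod p, ‖g (combine p n A y z)‖ ^ 2) / cA := by
    intro z
    show ‖(∑ y : {i // i ∈ A} → ZMod p, g (combine p n A y z)) /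
      (Fintype.card ({i // i ∈ A} → ZMod p) : ℂ)‖ ^ 2 ≤ _
    rw [norm_div, RCLike.norm_natCast, div_pow]
    have h1 : ‖∑ y : {i // i ∈ A} → ZMod p, g (combine p n A y z)‖ ^ 2
        ≤ cA * ∑ y : {i // i ∈ A} → ZMod p, ‖g (combine p n A y z)‖ ^ 2 := by
      calc ‖∑ y : {i // i ∈ A} → ZMod p, g (combine p n A y z)‖ ^ 2
          ≤ (∑ y : {i // i ∈ A} → ZMod p, ‖g (combine p n A y z)‖) ^ 2 := by
            have := norm_sum_le (Finset.univ : Finset ({i // i ∈ A} → ZMod p))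
              (fun y => g (combine p n A y z))
            exact pow_le_pow_left₀ (norm_nonneg _) this 2
        _ ≤ _ := by
            have := sq_sum_le_card_mul_sum_sq
              (s := (Finset.univ : Finset ({i // i ∈ A} → ZMod p)))
              (f := fun y => ‖g (combine p n A y z)‖)
            rw [Finset.card_univ] at this
            exact this
    calc ‖∑ y : {i // i ∈ A} → ZMod p, g (combine p n A y z)‖ ^ 2 / cA ^ 2
        ≤ (cA * ∑ y : {i // i ∈ A} → ZMod p, ‖g (combine p n A y z)‖ ^ 2) / cA ^ 2 := by
          gcongr
      _ = (∑ y : {i // i ∈ A} → ZMod p, ‖g (combine p n A y z)‖ ^ 2) / cA := by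
          field_simp
  show (∑ z : Fin n → ZMod p, ‖ET p n A g z‖ ^ 2) / (Fintype.card (Fin n → ZMod p) : ℝ)
    ≤ (∑ x : Fin n → ZMod p, ‖g x‖ ^ 2) / (Fintype.card (Fin n → ZMod p) : ℝ)
  have h2 : ∑ z : Fin n → ZMod p, ‖ET p n A g z‖ ^ 2
      ≤ ∑ x : Fin n → ZMod p, ‖g x‖ ^ 2 := by
    calc ∑ z : Fin n → ZMod p, ‖ET p n A g z‖ ^ 2
        ≤ ∑ z : Fin n → ZMod p,
            (∑ y : {i // i ∈ A} → ZMod p, ‖g (combine p n A y z)‖ ^ 2) / cA :=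
          Finset.sum_le_sum fun z _ => point z
      _ = (∑ y : {i // i ∈ A} → ZMod p, ∑ z : Fin n → ZMod p,
            ‖g (combine p n A y z)‖ ^ 2) / cA := by
          rw [← Finset.sum_div, Finset.sum_comm]
      _ = ∑ x : Fin n → ZMod p, ‖g x‖ ^ 2 := by
          rw [sum_combine p n A (fun w => ‖g w‖ ^ 2)]
          exact mul_div_cancel_left₀ _ (ne_of_gt hcA)
  gcongr


lemma combine_restrict {S T : Finset (Fin n)} (hTS : T ⊆ S) (x : {i // i ∈ S} → ZMod p)
    (y : {i // i ∈ S \ T} → ZMod p) (z : Fin n → ZMod p) :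
    combine p n T (fun i => x ⟨i.1, hTS i.2⟩) (combine p n (S \ T) y z)
      = combine p n (S \ T) y (combine p n S x z) := by
  funext i
  by_cases hT : i ∈ T
  · have hS : i ∈ S := hTS hT
    have hST : i ∉ S \ T := by simp [hT]
    simp [combine, hT, hST, hS]
  · by_cases hS : i ∈ S
    · have hST : i ∈ S \ T := Finset.mem_sdiff.mpr ⟨hS, hT⟩
      simp [combine, hT, hST]
    · have hST : i ∉ S \ T := by simp [hS]
      simp [combine, hT, hST, hS]

lemma restrict_eq {S T : Finset (Fin n)} (hTS : T ⊆ S) (x : {i // i ∈ S} → ZMod p)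
    (f : (Fin n → ZMod p) → ℂ) (z : Fin n → ZMod p) :
    ET p n (S \ T) (DD p n T (fun i => x ⟨i.1, hTS i.2⟩) f) z
      = ET p n (S \ T) (LS p n T f) (combine p n S x z) := by
  have harg : ∀ y : {i // i ∈ S \ T} → ZMod p,
      DD p n T (fun i => x ⟨i.1, hTS i.2⟩) f (combine p n (S \ T) y z)
        = LS p n T f (combine p n (S \ T) y (combine p n S x z)) := by
    intro y
    simp only [DD]
    rw [combine_restrict]
  simp only [ET]
  rw [Finset.sum_congr rfl fun y _ => harg y]

end Aux

/-- smallness of the influences implies smallness of the restriction. -/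
theorem stmt4 (p n : ℕ) [NeZero p] [Fact p.Prime] (f : (Fin n → ZMod p) → ℂ)
    (S : Finset (Fin n)) (x : {i // i ∈ S} → ZMod p) (ε : ℝ)
    (h : ∀ T : Finset (Fin n), ∀ hT : T ⊆ S,
      N2 p n (DD p n T (fun i => x ⟨i.1, hT i.2⟩) f) ≤ ε) :
    N2 p n (fun z => f (combine p n S x z)) ≤ 2 ^ (2 * S.card) * ε := by
  classical
  have hZ : Nonempty (ZMod p) := ⟨0⟩
  have hcV : (0:ℝ) < (Fintype.card (Fin n → ZMod p) : ℝ) := by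
    exact_mod_cast Fintype.card_pos
  set c := (Fintype.card (Fin n → ZMod p) : ℝ) with hc
  have hε : 0 ≤ ε := le_trans (N2_nonneg p n _) (h ∅ (Finset.empty_subset S))
  set xT : ∀ T : Finset (Fin n), {i // i ∈ T} → ZMod p :=
    fun T i => if hh : i.1 ∈ S then x ⟨i.1, hh⟩ else 0 with hxTdef
  have hxT : ∀ (T : Finset (Fin n)) (hTS : T ⊆ S),
      (fun i : {i // i ∈ T} => x ⟨i.1, hTS i.2⟩) = xT T := by
    intro T hTS
    funext i
    simp only [hxTdef]
    rw [dif_pos (hTS i.2)]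
  set u : Finset (Fin n) → (Fin n → ZMod p) → ℂ :=
    fun T => ET p n (S \ T) (DD p n T (xT T) f) with hu
  have hbound : ∀ T ∈ S.powerset, N2 p n (u T) ≤ ε := by
    intro T hT
    have hTS := Finset.mem_powerset.mp hT
    calc N2 p n (u T) ≤ N2 p n (DD p n T (xT T) f) := N2_ET_le p n _ _
      _ = N2 p n (DD p n T (fun i => x ⟨i.1, hTS i.2⟩) f) := by rw [hxT T hTS]
      _ ≤ ε := h T hTS
  have hid : (fun z => f (combine p n S x z)) = fun z => ∑ T ∈ S.powerset, u T z := by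
    funext z
    rw [← key p n S f (combine p n S x z)]
    refine Finset.sum_congr rfl fun T hT => ?_
    have hTS := Finset.mem_powerset.mp hT
    show _ = ET p n (S \ T) (DD p n T (xT T) f) z
    rw [← hxT T hTS]
    exact (restrict_eq p n hTS x f z).symm
  set le2 := WithLp.linearEquiv 2 ℂ ((Fin n → ZMod p) → ℂ) with hle2
  have hnorm : ∀ w : (Fin n → ZMod p) → ℂ,
      ‖le2.symm w‖ = Real.sqrt (∑ z, ‖w z‖ ^ 2) := by
    intro w
    rw [EuclideanSpace.norm_eq]
    rfl
  have hterm : ∀ T ∈ S.powerset, ‖le2.symm (u T)‖ ≤ Real.sqrt (c * ε) := by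
    intro T hT
    rw [hnorm]
    apply Real.sqrt_le_sqrt
    have hb := hbound T hT
    have : (∑ z, ‖u T z‖ ^ 2) / c ≤ ε := hb
    calc (∑ z, ‖u T z‖ ^ 2) = ((∑ z, ‖u T z‖ ^ 2) / c) * c := by field_simp
      _ ≤ ε * c := by gcongr
      _ = c * ε := mul_comm _ _
  have tri : ‖le2.symm (fun z => ∑ T ∈ S.powerset, u T z)‖
      ≤ ∑ T ∈ S.powerset, ‖le2.symm (u T)‖ := by
    have hsum : (fun z => ∑ T ∈ S.powerset, u T z) = ∑ T ∈ S.powerset, u T := by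
      funext z
      exact (Finset.sum_apply z _ _).symm
    rw [hsum, map_sum]
    exact norm_sum_le _ _
  have htot : ‖le2.symm (fun z => f (combine p n S x z))‖
      ≤ 2 ^ S.card * Real.sqrt (c * ε) := by
    rw [hid]
    refine tri.trans ?_
    calc ∑ T ∈ S.powerset, ‖le2.symm (u T)‖
        ≤ ∑ _T ∈ S.powerset, Real.sqrt (c * ε) := Finset.sum_le_sum hterm
      _ = (S.powerset.card : ℝ) * Real.sqrt (c * ε) := by
          rw [Finset.sum_const, nsmul_eq_mul]
      _ = 2 ^ S.card * Real.sqrt (c * ε) := by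
          rw [Finset.card_powerset]
          push_cast
          ring
  have hsq : ∑ z, ‖f (combine p n S x z)‖ ^ 2 ≤ 2 ^ (2 * S.card) * (c * ε) := by
    have h1 : ‖le2.symm (fun z => f (combine p n S x z))‖ ^ 2
        ≤ (2 ^ S.card * Real.sqrt (c * ε)) ^ 2 :=
      pow_le_pow_left₀ (norm_nonneg _) htot 2
    rw [hnorm, Real.sq_sqrt (Finset.sum_nonneg fun z _ => by positivity)] at h1
    calc ∑ z, ‖f (combine p n S x z)‖ ^ 2
        ≤ (2 ^ S.card * Real.sqrt (c * ε)) ^ 2 := h1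
      _ = 2 ^ (2 * S.card) * (c * ε) := by
          rw [mul_pow, Real.sq_sqrt (by positivity), ← pow_mul, mul_comm S.card 2]
  show (∑ z, ‖f (combine p n S x z)‖ ^ 2) / c ≤ 2 ^ (2 * S.card) * ε
  rw [div_le_iff₀ hcV]
  calc ∑ z, ‖f (combine p n S x z)‖ ^ 2 ≤ 2 ^ (2 * S.card) * (c * ε) := hsq
    _ = 2 ^ (2 * S.card) * ε * c := by ring
end

section
/- Define a relation on L(W,V) (linear maps between finite-dimensional vector spaces over a field) by X ≤ Y iff rank(Y) = rank(X) + rank(Y − X). Then X ≤ Y holds if and only if Im(X) ≤ Im(Y) and X agrees with Y on Y^{-1}(Im(X)). Moreover, this relation is a partial order on L(W,V). -/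
open LinearMap Module

/-- The rank-additivity relation `X ≤ Y` iff `rank(Y) = rank(X) + rank(Y - X)`. -/
def rLE (K : Type*) [Field K] {M N : Type*} [AddCommGroup M] [Module K M]
    [AddCommGroup N] [Module K N] (X Y : M →ₗ[K] N) : Prop :=
  Module.finrank K (LinearMap.range Y) =
    Module.finrank K (LinearMap.range X) + Module.finrank K (LinearMap.range (Y - X))

lemma rLE_char {K V W : Type} [Field K]
    [AddCommGroup V] [Module K V] [FiniteDimensional K V]
    [AddCommGroup W] [Module K W] (X Y : W →ₗ[K] V) :
    rLE K X Y ↔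
      (LinearMap.range X ≤ LinearMap.range Y ∧
        ∀ w : W, Y w ∈ LinearMap.range X → X w = Y w) := by
  set S := LinearMap.range X with hS
  set T := LinearMap.range (Y - X) with hT
  have hYle : LinearMap.range Y ≤ S ⊔ T := by
    rintro v ⟨w, rfl⟩
    have : Y w = X w + (Y - X) w := by simp
    rw [this]
    exact Submodule.add_mem _ (Submodule.mem_sup_left ⟨w, rfl⟩)
      (Submodule.mem_sup_right ⟨w, rfl⟩)
  have hkey := Submodule.finrank_sup_add_finrank_inf_eq S T
  constructor
  · intro h
    replace h : finrank K ↥(LinearMap.range Y) = finrank K S + finrank K T := h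
    have h1 : finrank K ↥(S ⊔ T) ≤ finrank K S + finrank K T := by omega
    have h2 : finrank K ↥(LinearMap.range Y) ≤ finrank K ↥(S ⊔ T) :=
      Submodule.finrank_mono hYle
    have heq : LinearMap.range Y = S ⊔ T :=
      Submodule.eq_of_le_of_finrank_le hYle (by omega)
    have hinf : finrank K ↥(S ⊓ T) = 0 := by
      rw [heq] at h; omega
    have hbot : S ⊓ T = ⊥ := Submodule.finrank_eq_zero.mp hinf
    constructor
    · rw [heq]; exact le_sup_left
    · intro w hw
      have hmem : (Y - X) w ∈ S ⊓ T := by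
        refine ⟨?_, ⟨w, rfl⟩⟩
        have : (Y - X) w = Y w - X w := by simp
        rw [this]
        exact Submodule.sub_mem _ hw ⟨w, rfl⟩
      rw [hbot] at hmem
      have : Y w - X w = 0 := by simpa using hmem
      exact (sub_eq_zero.mp this).symm
  · rintro ⟨hle, hag⟩
    have hTle : T ≤ LinearMap.range Y := by
      rintro v ⟨w, rfl⟩
      have : (Y - X) w = Y w - X w := by simp
      rw [this]
      exact Submodule.sub_mem _ ⟨w, rfl⟩ (hle ⟨w, rfl⟩)
    have hsup : S ⊔ T = LinearMap.range Y :=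
      le_antisymm (sup_le hle hTle) hYle
    have hbot : S ⊓ T = ⊥ := by
      rw [eq_bot_iff]
      rintro v ⟨hvS, w, rfl⟩
      have hYw : Y w ∈ S := by
        have : Y w = X w + (Y - X) w := by simp
        rw [this]
        exact Submodule.add_mem _ ⟨w, rfl⟩ hvS
      have := hag w hYw
      simp [this]
    unfold rLE
    rw [← hsup]
    show finrank K ↥(S ⊔ T) = finrank K S + finrank K T
    rw [hbot] at hkey
    have hb : finrank K (⊥ : Submodule K V) = 0 := finrank_bot K V
    omega

/-- characterisation of the rank-additivity relation, and the fact that it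
is a partial order on `L(W,V)`. -/
theorem stmt11 (K V W : Type) [Field K]
    [AddCommGroup V] [Module K V] [FiniteDimensional K V]
    [AddCommGroup W] [Module K W] [FiniteDimensional K W] :
    (∀ X Y : W →ₗ[K] V, rLE K X Y ↔
      (LinearMap.range X ≤ LinearMap.range Y ∧
        ∀ w : W, Y w ∈ LinearMap.range X → X w = Y w)) ∧
    (∀ X : W →ₗ[K] V, rLE K X X) ∧
    (∀ X Y : W →ₗ[K] V, rLE K X Y → rLE K Y X → X = Y) ∧
    (∀ X Y Z : W →ₗ[K] V, rLE K X Y → rLE K Y Z → rLE K X Z) := by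
  refine ⟨fun X Y => rLE_char X Y, fun X => ?_, fun X Y hXY hYX => ?_, fun X Y Z hXY hYZ => ?_⟩
  · unfold rLE
    simp
  · have h1 : LinearMap.range (X - Y) = LinearMap.range (Y - X) := by
      rw [show X - Y = -(Y - X) by rw [neg_sub], LinearMap.range_neg]
    unfold rLE at hXY hYX
    rw [h1] at hYX
    have h0 : finrank K ↥(LinearMap.range (Y - X)) = 0 := by omega
    have hbot : LinearMap.range (Y - X) = ⊥ := Submodule.finrank_eq_zero.mp h0
    have : Y - X = 0 := LinearMap.range_eq_bot.mp hbot
    linear_combination (norm := module) -this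
  · rw [rLE_char] at hXY hYZ ⊢
    obtain ⟨hle1, hag1⟩ := hXY
    obtain ⟨hle2, hag2⟩ := hYZ
    refine ⟨le_trans hle1 hle2, fun w hw => ?_⟩
    have hY : Y w = Z w := hag2 w (hle1 hw)
    have : X w = Y w := hag1 w (hY ▸ hw)
    rw [this, hY]
end

section
/- Let V, W be finite-dimensional vector spaces over a field and X, Y ∈ L(W,V) with X ≤ Y (meaning rank(Y) = rank(X) + rank(Y−X)). Let V₁ = Im(X) and W₁ = ker(X). Then rank(Y(W₁, V/V₁)) = rank(Y) − rank(X), where Y(W₁,V/V₁) is the restriction of Y to W₁ composed with the quotient map V → V/V₁. -/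
open LinearMap Module

/-- if `X ≤ Y`, then `rank(Y(ker X, V/Im X)) = rank(Y) − rank(X)`. -/
theorem stmt13 (K V W : Type) [Field K]
    [AddCommGroup V] [Module K V] [FiniteDimensional K V]
    [AddCommGroup W] [Module K W] [FiniteDimensional K W]
    (X Y : W →ₗ[K] V) (h : rLE K X Y) :
    Module.finrank K
        (LinearMap.range ((LinearMap.range X).mkQ ∘ₗ (Y ∘ₗ (LinearMap.ker X).subtype))) =
      Module.finrank K (LinearMap.range Y) - Module.finrank K (LinearMap.range X) := by
  unfold rLE at h
  set Z := Y - X with hZ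
  -- rank-nullity facts
  have rnX := X.finrank_range_add_finrank_ker
  have rnY := Y.finrank_range_add_finrank_ker
  have rnZ := Z.finrank_range_add_finrank_ker
  -- range Y ≤ range X ⊔ range Z
  have hle : LinearMap.range Y ≤ LinearMap.range X ⊔ LinearMap.range Z := by
    rintro v ⟨w, rfl⟩
    have : Y w = X w + Z w := by simp [hZ]
    rw [this]
    exact Submodule.add_mem_sup (LinearMap.mem_range_self _ _) (LinearMap.mem_range_self _ _)
  have hsup := Submodule.finrank_sup_add_finrank_inf_eq (LinearMap.range X) (LinearMap.range Z)
  have hmono := Submodule.finrank_mono hle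
  -- Fact A : range X ⊓ range Z = ⊥
  have hinf0 : finrank K ↥(LinearMap.range X ⊓ LinearMap.range Z) = 0 := by omega
  have hinf : LinearMap.range X ⊓ LinearMap.range Z = ⊥ :=
    Submodule.finrank_eq_zero.mp hinf0
  -- Fact B : ker X ⊓ ker Z has finrank = nullity of Y
  have hkk : LinearMap.ker X ⊓ LinearMap.ker Z ≤ LinearMap.ker Y := by
    rintro w ⟨hw1, hw2⟩
    have h1 : X w = 0 := hw1
    have h2 : Z w = 0 := hw2
    have : Y w = X w + Z w := by simp [hZ]
    simp only [LinearMap.mem_ker, this, h1, h2, add_zero]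
  have hksup := Submodule.finrank_sup_add_finrank_inf_eq (LinearMap.ker X) (LinearMap.ker Z)
  have hksup_le : finrank K ↥(LinearMap.ker X ⊔ LinearMap.ker Z) ≤ finrank K W :=
    Submodule.finrank_le _
  have hkk_le : finrank K ↥(LinearMap.ker X ⊓ LinearMap.ker Z) ≤ finrank K ↥(LinearMap.ker Y) :=
    Submodule.finrank_mono hkk
  have hkkeq : finrank K ↥(LinearMap.ker X ⊓ LinearMap.ker Z) = finrank K ↥(LinearMap.ker Y) := by
    omega
  -- Z(ker X) = range Z
  have hmapZ : Submodule.map Z (LinearMap.ker X) = LinearMap.range Z := by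
    apply Submodule.eq_of_le_of_finrank_le (LinearMap.map_le_range)
    have hdr : Submodule.map Z (LinearMap.ker X)
        = LinearMap.range (Z.domRestrict (LinearMap.ker X)) := by
      rw [LinearMap.range_domRestrict]
    have rnDR := (Z.domRestrict (LinearMap.ker X)).finrank_range_add_finrank_ker
    have hkerdr : LinearMap.ker (Z.domRestrict (LinearMap.ker X))
        = Submodule.comap (LinearMap.ker X).subtype (LinearMap.ker Z) := by
      rw [LinearMap.ker_domRestrict]
    have hfk : finrank K ↥(LinearMap.ker (Z.domRestrict (LinearMap.ker X)))
        = finrank K ↥(LinearMap.ker X ⊓ LinearMap.ker Z) := by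
      rw [hkerdr, ← Submodule.map_comap_subtype, Submodule.finrank_map_subtype_eq]
    have : finrank K ↥(Submodule.map Z (LinearMap.ker X))
        = finrank K ↥(LinearMap.ker X) - finrank K ↥(LinearMap.ker Y) := by
      rw [hdr] at *
      omega
    omega
  -- the target map equals mkQ ∘ Z ∘ subtype
  have hmapeq : (LinearMap.range X).mkQ ∘ₗ (Y ∘ₗ (LinearMap.ker X).subtype)
      = (LinearMap.range X).mkQ ∘ₗ (Z ∘ₗ (LinearMap.ker X).subtype) := by
    ext w
    have hw : X w.1 = 0 := w.2
    simp [hZ, hw]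
  rw [hmapeq]
  have hrange : LinearMap.range ((LinearMap.range X).mkQ ∘ₗ (Z ∘ₗ (LinearMap.ker X).subtype))
      = Submodule.map (LinearMap.range X).mkQ (LinearMap.range Z) := by
    rw [LinearMap.range_comp, LinearMap.range_comp, Submodule.range_subtype, hmapZ]
  rw [hrange]
  -- mkQ is injective on range Z
  have hinj : Function.Injective
      ((LinearMap.range X).mkQ ∘ₗ (LinearMap.range Z).subtype) := by
    rw [← LinearMap.ker_eq_bot, LinearMap.ker_comp, Submodule.ker_mkQ]
    rw [Submodule.eq_bot_iff]
    rintro ⟨v, hv⟩ hv2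
    have : v ∈ LinearMap.range X ⊓ LinearMap.range Z := ⟨hv2, hv⟩
    rw [hinf] at this
    simpa using this
  have hfr : finrank K ↥(Submodule.map (LinearMap.range X).mkQ (LinearMap.range Z))
      = finrank K ↥(LinearMap.range Z) := by
    have : Submodule.map (LinearMap.range X).mkQ (LinearMap.range Z)
        = LinearMap.range ((LinearMap.range X).mkQ ∘ₗ (LinearMap.range Z).subtype) := by
      rw [LinearMap.range_comp, Submodule.range_subtype]
    rw [this, LinearMap.finrank_range_of_inj hinj]
  omega
end

section
/- Let q be a prime power, V, W finite-dimensional F_q-vector spaces, and let Y ∈ L(W,V) with ker(Y) ⊆ W₁ and Im(Y) ⊇ V₁, where V₁ ≤ V, W₁ ≤ W. Then there exists a unique triple (W₂, V₂, X) with W₁ ≤ W₂ ≤ W, V₂ ≤ V₁, X ∈ L(W₂, V₁/V₂) a linear surjection with kernel W₁, such that Y^{-1}(V₂) ⊆ W₂ and X ≤ Y(W₂, V/V₂). Explicitly, W₂ = W₁ + Y^{-1}(V₁) and V₂ = Y(W₁) ∩ V₁. -/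
open LinearMap Module Submodule


section Aux

variable {K : Type*} [Field K] {V W : Type*}
  [AddCommGroup V] [Module K V] [AddCommGroup W] [Module K W]

/-- Consequences of rank additivity. -/
lemma rank_add_consequences {M N : Type*} [AddCommGroup M] [Module K M]
    [AddCommGroup N] [Module K N] [FiniteDimensional K M]
    (f g : M →ₗ[K] N)
    (h : finrank K (LinearMap.range g) =
      finrank K (LinearMap.range f) + finrank K (LinearMap.range (g - f))) :
    LinearMap.range f ⊓ LinearMap.range (g - f) = ⊥ ∧
    LinearMap.range g = LinearMap.range f ⊔ LinearMap.range (g - f) := by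
  have hle : LinearMap.range g ≤ LinearMap.range f ⊔ LinearMap.range (g - f) := by
    rintro _ ⟨m, rfl⟩
    have hgm : g m = f m + (g - f) m := by simp
    rw [hgm]
    exact add_mem_sup (LinearMap.mem_range_self f m) (LinearMap.mem_range_self _ m)
  have h1 := Submodule.finrank_sup_add_finrank_inf_eq (LinearMap.range f)
    (LinearMap.range (g - f))
  have h2 : finrank K (LinearMap.range g) ≤
      finrank K ↥(LinearMap.range f ⊔ LinearMap.range (g - f)) :=
    Submodule.finrank_mono hle
  have h3 : finrank K ↥(LinearMap.range f ⊓ LinearMap.range (g - f)) = 0 := by omega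
  have h4 : LinearMap.range f ⊓ LinearMap.range (g - f) = ⊥ :=
    Submodule.finrank_eq_zero.mp h3
  refine ⟨h4, Submodule.eq_of_le_of_finrank_le hle (by omega)⟩

variable [FiniteDimensional K V] [FiniteDimensional K W]

lemma uniq_aux (Y : W →ₗ[K] V) (V₁ : Submodule K V) (W₁ : Submodule K W)
    (hker : LinearMap.ker Y ≤ W₁) (him : V₁ ≤ LinearMap.range Y)
    (W₂ : Submodule K W) (V₂ : Submodule K V) (X : ↥W₂ →ₗ[K] V ⧸ V₂)
    (h1 : W₁ ≤ W₂) (h2 : V₂ ≤ V₁)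
    (h3 : LinearMap.range X = V₁.map V₂.mkQ)
    (h4 : LinearMap.ker X = W₁.comap W₂.subtype)
    (h5 : ∀ w : W, Y w ∈ V₂ → w ∈ W₂)
    (h6 : finrank K (LinearMap.range (V₂.mkQ ∘ₗ (Y ∘ₗ W₂.subtype))) =
      finrank K (LinearMap.range X) +
      finrank K (LinearMap.range ((V₂.mkQ ∘ₗ (Y ∘ₗ W₂.subtype)) - X))) :
    W₂ = W₁ ⊔ V₁.comap Y ∧ V₂ = (W₁.map Y) ⊓ V₁ ∧
    (∀ x : ↥W₂, (x : W) ∈ W₁ → X x = 0) ∧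
    (∀ x : ↥W₂, Y (x : W) ∈ V₁ → X x = V₂.mkQ (Y (x : W))) := by
  set Ybar := V₂.mkQ ∘ₗ (Y ∘ₗ W₂.subtype) with hYbar
  obtain ⟨hdisj, hrange⟩ := rank_add_consequences X Ybar h6
  -- X vanishes on W₁
  have fa : ∀ x : ↥W₂, (x : W) ∈ W₁ → X x = 0 := by
    intro x hx
    have : x ∈ LinearMap.ker X := by
      rw [h4]; simpa [Submodule.mem_comap] using hx
    exact this
  -- If Ybar x = 0 then X x = 0
  have hkerY : ∀ x : ↥W₂, Ybar x = 0 → X x = 0 := by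
    intro x hx
    have hmem : X x ∈ LinearMap.range X ⊓ LinearMap.range (Ybar - X) := by
      constructor
      · exact LinearMap.mem_range_self X x
      · refine ⟨-x, ?_⟩
        simp [hx]
    rw [hdisj] at hmem
    simpa using hmem
  -- V₂ = Y(W₁) ⊓ V₁
  have hV₂ : V₂ = (W₁.map Y) ⊓ V₁ := by
    apply le_antisymm
    · intro v hv
      have hv1 : v ∈ V₁ := h2 hv
      obtain ⟨w, rfl⟩ := him hv1
      have hw2 : w ∈ W₂ := h5 w hv
      have hY0 : Ybar ⟨w, hw2⟩ = 0 := by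
        simp only [hYbar, LinearMap.comp_apply, Submodule.subtype_apply]
        exact (Submodule.Quotient.mk_eq_zero V₂).mpr hv
      have hX0 : X ⟨w, hw2⟩ = 0 := hkerY _ hY0
      have : (⟨w, hw2⟩ : ↥W₂) ∈ LinearMap.ker X := hX0
      rw [h4] at this
      exact ⟨Submodule.mem_map_of_mem this, hv1⟩
    · rintro v ⟨⟨w₁, hw₁, rfl⟩, hv1⟩
      set x : ↥W₂ := ⟨w₁, h1 hw₁⟩
      have hX0 : X x = 0 := fa x hw₁
      have hmem : V₂.mkQ (Y w₁) ∈ LinearMap.range X ⊓ LinearMap.range (Ybar - X) := by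
        constructor
        · rw [h3]; exact Submodule.mem_map_of_mem hv1
        · refine ⟨x, ?_⟩
          simp [hYbar, hX0]; rfl
      rw [hdisj] at hmem
      have : V₂.mkQ (Y w₁) = 0 := by simpa using hmem
      exact (Submodule.Quotient.mk_eq_zero V₂).mp this
  -- Y⁻¹ V₁ ≤ W₂
  have hUW : V₁.comap Y ≤ W₂ := by
    intro w hw
    have hw' : Y w ∈ V₁ := hw
    have hmem : V₂.mkQ (Y w) ∈ LinearMap.range Ybar := by
      rw [hrange]
      exact Submodule.mem_sup_left (show V₂.mkQ (Y w) ∈ LinearMap.range X by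
        rw [h3]; exact Submodule.mem_map_of_mem hw')
    obtain ⟨z, hz⟩ := hmem
    have hz' : V₂.mkQ (Y w) = V₂.mkQ (Y (z : W)) := by simpa [hYbar] using hz.symm
    have hsub : Y w - Y (z : W) ∈ V₂ :=
      (Submodule.Quotient.eq V₂).mp (by simpa [Submodule.mkQ_apply] using hz')
    have hmem2 : Y (w - (z : W)) ∈ V₂ := by rw [map_sub]; exact hsub
    have hwz : w - (z : W) ∈ W₂ := h5 _ hmem2
    have : w = (w - (z : W)) + (z : W) := by abel
    rw [this]
    exact W₂.add_mem hwz z.2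
  have hsup_le : W₁ ⊔ V₁.comap Y ≤ W₂ := sup_le h1 hUW
  -- dimension count
  have hW₂ : W₂ = W₁ ⊔ V₁.comap Y := by
    set U := V₁.comap Y with hU
    have hkerU : LinearMap.ker Y ≤ U := by
      intro w hw
      simp only [hU, Submodule.mem_comap]
      rw [show Y w = 0 from hw]
      exact V₁.zero_mem
    have hkerWU : LinearMap.ker Y ≤ W₁ ⊓ U := le_inf hker hkerU
    -- d1
    have d1 : finrank K ↥(LinearMap.range X) + finrank K ↥(LinearMap.ker X)
        = finrank K ↥W₂ := LinearMap.finrank_range_add_finrank_ker X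
    have d2 : finrank K ↥(LinearMap.ker X) = finrank K ↥W₁ := by
      rw [h4]
      exact LinearEquiv.finrank_eq (Submodule.comapSubtypeEquivOfLe h1)
    -- d3 : finrank (V₁.map mkQ) + finrank V₂ = finrank V₁
    have d3 : finrank K ↥(V₁.map V₂.mkQ) + finrank K ↥V₂ = finrank K ↥V₁ := by
      have e1 : LinearMap.range (V₂.mkQ ∘ₗ V₁.subtype) = V₁.map V₂.mkQ := by
        rw [LinearMap.range_comp, Submodule.range_subtype]
      have e2 : LinearMap.ker (V₂.mkQ ∘ₗ V₁.subtype) = V₂.comap V₁.subtype := by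
        rw [LinearMap.ker_comp, Submodule.ker_mkQ]
      have := LinearMap.finrank_range_add_finrank_ker (V₂.mkQ ∘ₗ V₁.subtype)
      rw [e1, e2] at this
      rw [← this]
      congr 1
      exact (LinearEquiv.finrank_eq (Submodule.comapSubtypeEquivOfLe h2)).symm
    -- d4 : finrank V₁ + finrank (ker Y) = finrank U
    have d4 : finrank K ↥V₁ + finrank K ↥(LinearMap.ker Y) = finrank K ↥U := by
      have e1 : LinearMap.range (Y ∘ₗ U.subtype) = V₁ := by
        rw [LinearMap.range_comp, Submodule.range_subtype, hU,
          Submodule.map_comap_eq, inf_eq_right.mpr him]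
      have e2 : LinearMap.ker (Y ∘ₗ U.subtype) = (LinearMap.ker Y).comap U.subtype := by
        rw [LinearMap.ker_comp]
      have := LinearMap.finrank_range_add_finrank_ker (Y ∘ₗ U.subtype)
      rw [e1, e2] at this
      rw [← this]
      congr 1
      exact (LinearEquiv.finrank_eq (Submodule.comapSubtypeEquivOfLe hkerU)).symm
    -- d5 : finrank V₂ + finrank (ker Y) = finrank (W₁ ⊓ U)
    have d5 : finrank K ↥V₂ + finrank K ↥(LinearMap.ker Y) = finrank K ↥(W₁ ⊓ U) := by
      have e1 : LinearMap.range (Y ∘ₗ (W₁ ⊓ U).subtype) = (W₁.map Y) ⊓ V₁ := by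
        rw [LinearMap.range_comp, Submodule.range_subtype]
        apply le_antisymm
        · rintro _ ⟨w, ⟨hw1, hwU⟩, rfl⟩
          exact ⟨Submodule.mem_map_of_mem hw1, hwU⟩
        · rintro v ⟨⟨w, hw, rfl⟩, hv⟩
          exact ⟨w, ⟨hw, hv⟩, rfl⟩
      have e2 : LinearMap.ker (Y ∘ₗ (W₁ ⊓ U).subtype)
          = (LinearMap.ker Y).comap (W₁ ⊓ U).subtype := by
        rw [LinearMap.ker_comp]
      have := LinearMap.finrank_range_add_finrank_ker (Y ∘ₗ (W₁ ⊓ U).subtype)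
      rw [e1, e2, ← hV₂] at this
      rw [← this]
      congr 1
      exact (LinearEquiv.finrank_eq (Submodule.comapSubtypeEquivOfLe hkerWU)).symm
    have d6 := Submodule.finrank_sup_add_finrank_inf_eq W₁ U
    have d7 : finrank K ↥(LinearMap.range X) = finrank K ↥(V₁.map V₂.mkQ) := by rw [h3]
    refine (Submodule.eq_of_le_of_finrank_le hsup_le (by omega)).symm
  -- final agreement fact
  have fb : ∀ x : ↥W₂, Y (x : W) ∈ V₁ → X x = V₂.mkQ (Y (x : W)) := by
    intro x hx
    have hYmem : Ybar x ∈ LinearMap.range X := by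
      rw [h3]
      exact ⟨Y (x : W), hx, rfl⟩
    have hmem : Ybar x - X x ∈ LinearMap.range X ⊓ LinearMap.range (Ybar - X) := by
      constructor
      · exact sub_mem hYmem (LinearMap.mem_range_self X x)
      · exact ⟨x, rfl⟩
    rw [hdisj] at hmem
    have : Ybar x - X x = 0 := by simpa using hmem
    have hXx : X x = Ybar x := by
      rw [← sub_eq_zero]; rw [← neg_sub]; simp [this]
    rw [hXx]
    simp [hYbar]
  exact ⟨hW₂, hV₂, fa, fb⟩

end Aux


section Aux2
variable {K : Type*} [Field K] {V W : Type*}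
  [AddCommGroup V] [Module K V] [AddCommGroup W] [Module K W]
  [FiniteDimensional K V] [FiniteDimensional K W]

lemma exist_aux (Y : W →ₗ[K] V) (V₁ : Submodule K V) (W₁ : Submodule K W)
    (hker : LinearMap.ker Y ≤ W₁) (him : V₁ ≤ LinearMap.range Y) :
    ∃ X : ↥(W₁ ⊔ V₁.comap Y) →ₗ[K] V ⧸ ((W₁.map Y) ⊓ V₁),
      (LinearMap.range X = V₁.map ((W₁.map Y) ⊓ V₁).mkQ) ∧
      (LinearMap.ker X = W₁.comap (W₁ ⊔ V₁.comap Y).subtype) ∧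
      finrank K (LinearMap.range (((W₁.map Y) ⊓ V₁).mkQ ∘ₗ
          (Y ∘ₗ (W₁ ⊔ V₁.comap Y).subtype))) =
        finrank K (LinearMap.range X) +
        finrank K (LinearMap.range ((((W₁.map Y) ⊓ V₁).mkQ ∘ₗ
          (Y ∘ₗ (W₁ ⊔ V₁.comap Y).subtype)) - X)) := by
  set U : Submodule K W := V₁.comap Y with hU
  set W₂ : Submodule K W := W₁ ⊔ U with hW₂
  set V₂ : Submodule K V := (W₁.map Y) ⊓ V₁ with hV₂def
  have hW₁le : W₁ ≤ W₂ := le_sup_left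
  have hUle : U ≤ W₂ := le_sup_right
  have hV₂le : V₂ ≤ V₁ := inf_le_right
  set A : Submodule K (V ⧸ V₂) := V₁.map V₂.mkQ with hA
  set B : Submodule K (V ⧸ V₂) := (W₁.map Y).map V₂.mkQ with hB
  -- A and B intersect trivially
  have hAB : A ⊓ B = ⊥ := by
    apply eq_bot_iff.mpr
    rintro z ⟨hzA, hzB⟩
    obtain ⟨v₁, hv₁, rfl⟩ := hzA
    obtain ⟨v₂, hv₂, hv₂eq⟩ := hzB
    have hsub : v₂ - v₁ ∈ V₂ :=
      (Submodule.Quotient.eq V₂).mp (by simpa [Submodule.mkQ_apply] using hv₂eq)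
    have hv₂V₁ : v₂ ∈ V₁ := by
      have : v₂ = (v₂ - v₁) + v₁ := by abel
      rw [this]; exact V₁.add_mem (hV₂le hsub) hv₁
    have hv₂V₂ : v₂ ∈ V₂ := ⟨hv₂, hv₂V₁⟩
    have : V₂.mkQ v₂ = 0 := (Submodule.Quotient.mk_eq_zero V₂).mpr hv₂V₂
    simp only [Submodule.mem_bot]
    rw [← hv₂eq]
    simpa [Submodule.mkQ_apply] using this
  -- choose a complement C of A containing B
  obtain ⟨D, hD⟩ := Submodule.exists_isCompl (A ⊔ B)
  set C : Submodule K (V ⧸ V₂) := B ⊔ D with hC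
  have hBC : B ≤ C := le_sup_left
  have hAC : IsCompl A C := by
    have htop : A ⊔ C = ⊤ := by
      rw [hC, ← sup_assoc, codisjoint_iff.mp hD.2]
    have hBD : B ⊓ D = ⊥ := by
      apply eq_bot_iff.mpr
      intro z hz
      have : z ∈ (A ⊔ B) ⊓ D := ⟨Submodule.mem_sup_right hz.1, hz.2⟩
      rwa [disjoint_iff.mp hD.1] at this
    have e1 := Submodule.finrank_sup_add_finrank_inf_eq A B
    have e3 := Submodule.finrank_sup_add_finrank_inf_eq (A ⊔ B) D
    have e4 := Submodule.finrank_sup_add_finrank_inf_eq A C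
    have e5 : finrank K ↥C + finrank K ↥(B ⊓ D) = finrank K ↥B + finrank K ↥D := by
      rw [hC]; exact Submodule.finrank_sup_add_finrank_inf_eq B D
    rw [hAB] at e1
    rw [disjoint_iff.mp hD.1, codisjoint_iff.mp hD.2] at e3
    rw [htop] at e4
    rw [hBD] at e5
    simp only [finrank_bot, add_zero] at e1 e3 e4 e5
    constructor
    · rw [disjoint_iff]
      apply Submodule.finrank_eq_zero.mp
      omega
    · rw [codisjoint_iff]; exact htop
  -- the projection onto A along C
  set prj : (V ⧸ V₂) →ₗ[K] V ⧸ V₂ := A.subtype ∘ₗ A.projectionOnto C hAC with hprj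
  have hprjA : ∀ z ∈ A, prj z = z := by
    intro z hz
    have := Submodule.linearProjOfIsCompl_apply_left hAC ⟨z, hz⟩
    simp only [hprj, LinearMap.comp_apply]
    rw [this]
    rfl
  have hprjC : ∀ z ∈ C, prj z = 0 := by
    intro z hz
    have := Submodule.linearProjOfIsCompl_apply_right hAC ⟨z, hz⟩
    simp only [hprj, LinearMap.comp_apply]
    rw [this]
    simp
  set Ybar : ↥W₂ →ₗ[K] V ⧸ V₂ := V₂.mkQ ∘ₗ (Y ∘ₗ W₂.subtype) with hYbar
  set X : ↥W₂ →ₗ[K] V ⧸ V₂ := prj ∘ₗ Ybar with hX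
  -- pointwise facts
  have fa : ∀ x : ↥W₂, (x : W) ∈ W₁ → X x = 0 := by
    intro x hx
    have : Ybar x ∈ B := ⟨Y (x : W), Submodule.mem_map_of_mem hx, rfl⟩
    simp only [hX, LinearMap.comp_apply]
    exact hprjC _ (hBC this)
  have fb : ∀ x : ↥W₂, (x : W) ∈ U → X x = V₂.mkQ (Y (x : W)) := by
    intro x hx
    have : Ybar x ∈ A := ⟨Y (x : W), hx, rfl⟩
    simp only [hX, LinearMap.comp_apply]
    rw [hprjA _ this]
    rfl
  have hdecomp : ∀ x : ↥W₂, ∃ a b : W, a ∈ W₁ ∧ b ∈ U ∧ (x : W) = a + b := by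
    intro x
    obtain ⟨a, ha, b, hb, hab⟩ := Submodule.mem_sup.mp x.2
    exact ⟨a, b, ha, hb, hab.symm⟩
  -- range X = A
  have hrangeX : LinearMap.range X = A := by
    apply le_antisymm
    · rintro _ ⟨x, rfl⟩
      obtain ⟨a, b, ha, hb, hab⟩ := hdecomp x
      have hxeq : x = (⟨a, hW₁le ha⟩ : ↥W₂) + ⟨b, hUle hb⟩ := by
        apply Subtype.ext; simp [hab]
      rw [hxeq, map_add, fa _ ha, fb _ hb, zero_add]
      exact ⟨Y b, hb, rfl⟩
    · rintro _ ⟨v, hv, rfl⟩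
      obtain ⟨u, rfl⟩ := him hv
      have hu : u ∈ U := hv
      exact ⟨⟨u, hUle hu⟩, (fb ⟨u, hUle hu⟩ hu).symm ▸ rfl⟩
  -- ker X = W₁'
  have hkerX : LinearMap.ker X = W₁.comap W₂.subtype := by
    apply le_antisymm
    · intro x hx
      obtain ⟨a, b, ha, hb, hab⟩ := hdecomp x
      have hxeq : x = (⟨a, hW₁le ha⟩ : ↥W₂) + ⟨b, hUle hb⟩ := by
        apply Subtype.ext; simp [hab]
      have hx0 : X x = 0 := hx
      rw [hxeq, map_add, fa _ ha, fb _ hb, zero_add] at hx0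
      have hYb : Y b ∈ V₂ := (Submodule.Quotient.mk_eq_zero V₂).mp hx0
      obtain ⟨w₁, hw₁, hw₁eq⟩ := hYb.1
      have : b - w₁ ∈ LinearMap.ker Y := by
        simp only [LinearMap.mem_ker, map_sub, hw₁eq, sub_self]
      have hbW₁ : b ∈ W₁ := by
        have : b = (b - w₁) + w₁ := by abel
        rw [this]; exact W₁.add_mem (hker ‹b - w₁ ∈ LinearMap.ker Y›) hw₁
      have : (x : W) ∈ W₁ := by rw [hab]; exact W₁.add_mem ha hbW₁
      exact this
    · intro x hx
      exact fa x hx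
  -- range (Ybar - X) = B
  have hrangeC : LinearMap.range (Ybar - X) = B := by
    apply le_antisymm
    · rintro _ ⟨x, rfl⟩
      obtain ⟨a, b, ha, hb, hab⟩ := hdecomp x
      have hxeq : x = (⟨a, hW₁le ha⟩ : ↥W₂) + ⟨b, hUle hb⟩ := by
        apply Subtype.ext; simp [hab]
      have hYbx : Ybar x = V₂.mkQ (Y a) + V₂.mkQ (Y b) := by
        simp only [hYbar, LinearMap.comp_apply, Submodule.subtype_apply, hab, map_add]
      have hXx : X x = V₂.mkQ (Y b) := by
        rw [hxeq, map_add, fa _ ha, fb _ hb, zero_add]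
      simp only [LinearMap.sub_apply, hYbx, hXx]
      have : V₂.mkQ (Y a) + V₂.mkQ (Y b) - V₂.mkQ (Y b) = V₂.mkQ (Y a) := by abel
      rw [this]
      exact ⟨Y a, Submodule.mem_map_of_mem ha, rfl⟩
    · rintro _ ⟨_, ⟨w₁, hw₁, rfl⟩, rfl⟩
      refine ⟨⟨w₁, hW₁le hw₁⟩, ?_⟩
      have h0 : X ⟨w₁, hW₁le hw₁⟩ = 0 := fa _ hw₁
      simp only [LinearMap.sub_apply, h0, sub_zero, hYbar, LinearMap.comp_apply,
        Submodule.subtype_apply]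
  -- range Ybar = A ⊔ B
  have hrangeY : LinearMap.range Ybar = A ⊔ B := by
    apply le_antisymm
    · rintro _ ⟨x, rfl⟩
      have : Ybar x = X x + (Ybar - X) x := by simp
      rw [this]
      exact Submodule.add_mem_sup (hrangeX ▸ LinearMap.mem_range_self X x)
        (hrangeC ▸ LinearMap.mem_range_self (Ybar - X) x)
    · apply sup_le
      · rw [← hrangeX]
        rintro _ ⟨x, rfl⟩
        obtain ⟨a, b, ha, hb, hab⟩ := hdecomp x
        have hxeq : x = (⟨a, hW₁le ha⟩ : ↥W₂) + ⟨b, hUle hb⟩ := by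
          apply Subtype.ext; simp [hab]
        rw [hxeq, map_add, fa _ ha, fb _ hb, zero_add]
        exact ⟨⟨b, hUle hb⟩, rfl⟩
      · rintro _ ⟨_, ⟨w₁, hw₁, rfl⟩, rfl⟩
        exact ⟨⟨w₁, hW₁le hw₁⟩, rfl⟩
  refine ⟨X, hrangeX, hkerX, ?_⟩
  have hfin := Submodule.finrank_sup_add_finrank_inf_eq A B
  rw [hAB] at hfin
  simp only [finrank_bot, add_zero] at hfin
  rw [hrangeY, hrangeX, hrangeC, hfin]

end Aux2




/-- The property required of the triple `(W₂, V₂, X)` in STATEMENT 14: `W₁ ≤ W₂`,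
`V₂ ≤ V₁`, `X : W₂ → V₁/V₂ ⊆ V/V₂` is a surjection onto `V₁/V₂` with kernel `W₁`,
`Y⁻¹(V₂) ⊆ W₂`, and `X ≤ Y(W₂, V/V₂)`. -/
def P14 (p s : ℕ) [Fact p.Prime] {V W : Type}
    [AddCommGroup V] [Module (GaloisField p s) V]
    [AddCommGroup W] [Module (GaloisField p s) W]
    (Y : W →ₗ[GaloisField p s] V)
    (V₁ : Submodule (GaloisField p s) V) (W₁ : Submodule (GaloisField p s) W)
    (t : Σ W₂ : Submodule (GaloisField p s) W, Σ V₂ : Submodule (GaloisField p s) V,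
      (↥W₂ →ₗ[GaloisField p s] V ⧸ V₂)) : Prop :=
  W₁ ≤ t.1 ∧ t.2.1 ≤ V₁ ∧
  LinearMap.range t.2.2 = V₁.map t.2.1.mkQ ∧
  LinearMap.ker t.2.2 = W₁.comap t.1.subtype ∧
  (∀ w : W, Y w ∈ t.2.1 → w ∈ t.1) ∧
  rLE (GaloisField p s) t.2.2 (t.2.1.mkQ ∘ₗ (Y ∘ₗ t.1.subtype))

/-- existence and uniqueness of the triple `(W₂, V₂, X)`, with the
explicit description `W₂ = W₁ + Y⁻¹(V₁)` and `V₂ = Y(W₁) ∩ V₁`. -/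
theorem stmt14 (p s : ℕ) [Fact p.Prime] (hs : s ≠ 0)
    (V W : Type) [AddCommGroup V] [Module (GaloisField p s) V]
    [FiniteDimensional (GaloisField p s) V]
    [AddCommGroup W] [Module (GaloisField p s) W]
    [FiniteDimensional (GaloisField p s) W]
    (Y : W →ₗ[GaloisField p s] V)
    (V₁ : Submodule (GaloisField p s) V) (W₁ : Submodule (GaloisField p s) W)
    (hker : LinearMap.ker Y ≤ W₁) (him : V₁ ≤ LinearMap.range Y) :
    (∃! t : Σ W₂ : Submodule (GaloisField p s) W, Σ V₂ : Submodule (GaloisField p s) V,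
        (↥W₂ →ₗ[GaloisField p s] V ⧸ V₂), P14 p s Y V₁ W₁ t) ∧
    (∀ t : Σ W₂ : Submodule (GaloisField p s) W, Σ V₂ : Submodule (GaloisField p s) V,
        (↥W₂ →ₗ[GaloisField p s] V ⧸ V₂), P14 p s Y V₁ W₁ t →
      t.1 = W₁ ⊔ V₁.comap Y ∧ t.2.1 = (W₁.map Y) ⊓ V₁) := by
  classical
  have key : ∀ t : (Σ W₂ : Submodule (GaloisField p s) W, Σ V₂ : Submodule (GaloisField p s) V,
        (↥W₂ →ₗ[GaloisField p s] V ⧸ V₂)), P14 p s Y V₁ W₁ t →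
      t.1 = W₁ ⊔ V₁.comap Y ∧ t.2.1 = (W₁.map Y) ⊓ V₁ ∧
      (∀ x : ↥t.1, (x : W) ∈ W₁ → t.2.2 x = 0) ∧
      (∀ x : ↥t.1, Y (x : W) ∈ V₁ → t.2.2 x = t.2.1.mkQ (Y (x : W))) := by
    rintro ⟨W₂, V₂, X⟩ ⟨p1, p2, p3, p4, p5, p6⟩
    exact uniq_aux Y V₁ W₁ hker him W₂ V₂ X p1 p2 p3 p4 p5 p6
  obtain ⟨X₀, hr, hk, hrle⟩ := exist_aux Y V₁ W₁ hker him
  have ht₀ : P14 p s Y V₁ W₁ ⟨W₁ ⊔ V₁.comap Y, (W₁.map Y) ⊓ V₁, X₀⟩ := by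
    refine ⟨le_sup_left, inf_le_right, hr, hk, ?_, hrle⟩
    intro w hw
    exact Submodule.mem_sup_right (Submodule.mem_comap.mpr hw.2)
  have huniq : ∀ t : (Σ W₂ : Submodule (GaloisField p s) W, Σ V₂ : Submodule (GaloisField p s) V,
        (↥W₂ →ₗ[GaloisField p s] V ⧸ V₂)), P14 p s Y V₁ W₁ t →
      t = ⟨W₁ ⊔ V₁.comap Y, (W₁.map Y) ⊓ V₁, X₀⟩ := by
    rintro ⟨W₂, V₂, X⟩ ht
    obtain ⟨e1, e2, f1, f2⟩ := key _ ht
    obtain ⟨e1', e2', f1', f2'⟩ := key _ ht₀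
    dsimp only at e1 e2 f1 f2 e1' e2' f1' f2'
    subst e1
    subst e2
    have hXX : X = X₀ := by
      apply LinearMap.ext
      intro x
      obtain ⟨a, ha, b, hb, hab⟩ := Submodule.mem_sup.mp x.2
      have hxeq : x = (⟨a, Submodule.mem_sup_left ha⟩ : ↥(W₁ ⊔ V₁.comap Y)) +
          ⟨b, Submodule.mem_sup_right hb⟩ := by
        apply Subtype.ext; simp [hab.symm]
      have hbV : Y b ∈ V₁ := hb
      rw [hxeq, map_add, map_add, f1 _ ha, f1' _ ha, f2 _ hbV, f2' _ hbV]
    rw [hXX]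
  refine ⟨⟨⟨W₁ ⊔ V₁.comap Y, (W₁.map Y) ⊓ V₁, X₀⟩, ht₀, huniq⟩, ?_⟩
  intro t ht
  exact ⟨(key t ht).1, (key t ht).2.1⟩
end

section
/- Let q be a prime power, V, W finite-dimensional F_q-vector spaces, v ∈ V nonzero, and X ∈ L(W,V) with v ∉ Im(X). If V' is a uniformly random codimension-one subspace of V not containing v, then Pr[Im(X) ⊆ V'] = q^{-rank(X)}. -/
open LinearMap Module

section Aux

variable (F V : Type) [Field F] [AddCommGroup V] [Module F V] [FiniteDimensional F V]

lemma aux_card_module [Finite F] : Nat.card V = Nat.card F ^ Module.finrank F V := by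
  have : Fintype F := Fintype.ofFinite F
  have : Finite V := Module.finite_of_finite F
  have : Fintype V := Fintype.ofFinite V
  rw [Nat.card_eq_fintype_card, Nat.card_eq_fintype_card, card_eq_pow_finrank (K := F)]

/-- Hyperplanes not containing `v` are in bijection with functionals sending `v` to `1`. -/
lemma aux_equiv (v : V) (hv : v ≠ 0) :
    Nat.card {H : Submodule F V // Module.finrank F (V ⧸ H) = 1 ∧ v ∉ H} =
      Nat.card {φ : V →ₗ[F] F // φ v = 1} := by
  refine (Nat.card_congr (Equiv.ofBijective ?_ ⟨?_, ?_⟩)).symm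
  · refine fun φ => ⟨LinearMap.ker φ.1, ?_, ?_⟩
    · have hsurj : Function.Surjective φ.1 := fun c => ⟨c • v, by simp [φ.2]⟩
      have e := φ.1.quotKerEquivOfSurjective hsurj
      rw [e.finrank_eq, Module.finrank_self]
    · intro h
      have := LinearMap.mem_ker.mp h
      rw [φ.2] at this
      exact one_ne_zero this
  · rintro ⟨φ, hφ⟩ ⟨ψ, hψ⟩ h
    have hker : LinearMap.ker φ = LinearMap.ker ψ := congrArg Subtype.val h
    refine Subtype.ext (LinearMap.ext fun x => ?_)
    have h1 : x - φ x • v ∈ LinearMap.ker φ := by simp [hφ]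
    rw [hker, LinearMap.mem_ker] at h1
    have : ψ x - φ x * ψ v = 0 := by simpa using h1
    rw [hψ, mul_one, sub_eq_zero] at this
    exact this.symm
  · rintro ⟨H, hH, hvH⟩
    set vb : V ⧸ H := H.mkQ v with hvb
    have hvb0 : vb ≠ 0 := by
      simpa [hvb, Submodule.Quotient.mk_eq_zero] using hvH
    set g : F →ₗ[F] V ⧸ H := LinearMap.toSpanSingleton F (V ⧸ H) vb with hg
    have hginj : Function.Injective g := by
      rw [← LinearMap.ker_eq_bot]
      exact LinearMap.ker_toSpanSingleton F hvb0
    have hgsurj : Function.Surjective g := by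
      have : FiniteDimensional F (V ⧸ H) := inferInstance
      have hfr : Module.finrank F F = Module.finrank F (V ⧸ H) := by
        rw [Module.finrank_self, hH]
      exact (LinearMap.injective_iff_surjective_of_finrank_eq_finrank hfr).mp hginj
    set e : F ≃ₗ[F] V ⧸ H := LinearEquiv.ofBijective g ⟨hginj, hgsurj⟩ with he
    refine ⟨⟨e.symm.toLinearMap ∘ₗ H.mkQ, ?_⟩, ?_⟩
    · have : e 1 = vb := by simp [he, hg, LinearMap.toSpanSingleton_apply]
      have : e.symm vb = 1 := by rw [← this, e.symm_apply_apply]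
      simpa [hvb] using this
    · refine Subtype.ext ?_
      show LinearMap.ker (e.symm.toLinearMap ∘ₗ H.mkQ) = H
      rw [LinearMap.ker_comp, LinearEquiv.ker, Submodule.comap_bot, Submodule.ker_mkQ]

lemma aux_card_functionals (v : V) (hv : v ≠ 0) :
    Nat.card {φ : V →ₗ[F] F // φ v = 1} =
      Nat.card {φ : V →ₗ[F] F // φ v = 0} := by
  obtain ⟨ψ, hψ⟩ : ∃ ψ : V →ₗ[F] F, ψ v ≠ 0 := by
    by_contra h
    push_neg at h
    exact hv ((Module.forall_dual_apply_eq_zero_iff F v).mp h)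
  set φ₀ : V →ₗ[F] F := (ψ v)⁻¹ • ψ with hφ₀
  have hφ₀v : φ₀ v = 1 := by simp [hφ₀, inv_mul_cancel₀ hψ]
  refine Nat.card_congr ⟨fun φ => ⟨φ.1 - φ₀, by simp [φ.2, hφ₀v]⟩,
    fun φ => ⟨φ.1 + φ₀, by simp [φ.2, hφ₀v]⟩, fun φ => by simp, fun φ => by simp⟩

/-- The number of hyperplanes not containing a nonzero vector `v` is `q^(n-1)`. -/
lemma hyp_count [Finite F] (v : V) (hv : v ≠ 0) :
    Nat.card {H : Submodule F V // Module.finrank F (V ⧸ H) = 1 ∧ v ∉ H} =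
      Nat.card F ^ (Module.finrank F V - 1) := by
  rw [aux_equiv F V v hv, aux_card_functionals F V v hv]
  set ev : Module.Dual F V →ₗ[F] F := Module.Dual.eval F V v with hev
  have hkey : {φ : V →ₗ[F] F // φ v = 0} = LinearMap.ker ev := by
    rfl
  have h2 : Nat.card {φ : V →ₗ[F] F // φ v = 0} = Nat.card (LinearMap.ker ev) := by
    apply Nat.card_congr
    exact Equiv.subtypeEquivRight fun φ => by simp [hev]
  rw [h2, aux_card_module F (LinearMap.ker ev)]
  congr 1
  have hsurj : Function.Surjective ev := by
    obtain ⟨ψ, hψ⟩ : ∃ ψ : V →ₗ[F] F, ψ v ≠ 0 := by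
      by_contra h
      push_neg at h
      exact hv ((Module.forall_dual_apply_eq_zero_iff F v).mp h)
    intro c
    exact ⟨(c * (ψ v)⁻¹) • ψ, by simp [hev, mul_assoc, inv_mul_cancel₀ hψ]⟩
  have hrn := LinearMap.finrank_range_add_finrank_ker ev
  rw [LinearMap.range_eq_top.mpr hsurj] at hrn
  have hdual : Module.finrank F (Module.Dual F V) = Module.finrank F V :=
    Subspace.dual_finrank_eq
  simp only [finrank_top, Module.finrank_self] at hrn
  omega

end Aux

/-- if `v ∉ Im(X)`, then a uniformly random codimension-one subspace `V'`
not containing `v` contains `Im(X)` with probability `q^{-rank(X)}`; equivalently, the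
counting identity below. -/
theorem stmt15 (p s : ℕ) [Fact p.Prime] (hs : s ≠ 0)
    (V W : Type) [AddCommGroup V] [Module (GaloisField p s) V]
    [FiniteDimensional (GaloisField p s) V]
    [AddCommGroup W] [Module (GaloisField p s) W]
    [FiniteDimensional (GaloisField p s) W]
    (v : V) (hv : v ≠ 0) (X : W →ₗ[GaloisField p s] V)
    (hX : v ∉ LinearMap.range X) :
    Nat.card {V' : Submodule (GaloisField p s) V //
        Module.finrank (GaloisField p s) (V ⧸ V') = 1 ∧ v ∉ V' ∧
          LinearMap.range X ≤ V'} *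
      (Nat.card (GaloisField p s)) ^ (Module.finrank (GaloisField p s) (LinearMap.range X)) =
    Nat.card {V' : Submodule (GaloisField p s) V //
        Module.finrank (GaloisField p s) (V ⧸ V') = 1 ∧ v ∉ V'} := by
  set F := GaloisField p s
  set U : Submodule F V := LinearMap.range X with hU
  set vb : V ⧸ U := U.mkQ v with hvb
  have hvb0 : vb ≠ 0 := by
    simpa [hvb, Submodule.Quotient.mk_eq_zero] using hX
  -- bijection between hyperplanes of V containing U (but not v) and hyperplanes of V⧸U
  -- not containing vb
  have hbij : Nat.card {V' : Submodule F V //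
        Module.finrank F (V ⧸ V') = 1 ∧ v ∉ V' ∧ U ≤ V'} =
      Nat.card {H : Submodule F (V ⧸ U) //
        Module.finrank F ((V ⧸ U) ⧸ H) = 1 ∧ vb ∉ H} := by
    apply Nat.card_congr
    refine ⟨?_, ?_, ?_, ?_⟩
    · rintro ⟨H, h1, h2, h3⟩
      refine ⟨Submodule.map U.mkQ H, ?_, ?_⟩
      · have e := Submodule.quotientQuotientEquivQuotient U H h3
        rw [e.finrank_eq, h1]
      · rintro hmem
        obtain ⟨x, hxH, hx⟩ := hmem
        have : v - x ∈ U := by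
          rw [← Submodule.Quotient.mk_eq_zero]
          have : U.mkQ (v - x) = 0 := by
            rw [map_sub, ← hvb, hx, sub_self]
          simpa using this
        exact h2 (by simpa using H.add_mem hxH (h3 this))
    · rintro ⟨H, h1, h2⟩
      refine ⟨Submodule.comap U.mkQ H, ?_, ?_, ?_⟩
      · have hle : U ≤ Submodule.comap U.mkQ H := by
          intro x hx
          simp only [Submodule.mem_comap, Submodule.mkQ_apply]
          rw [Submodule.Quotient.mk_eq_zero U |>.mpr hx]
          exact H.zero_mem
        have e := Submodule.quotientQuotientEquivQuotient U (Submodule.comap U.mkQ H) hle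
        have hmc : Submodule.map U.mkQ (Submodule.comap U.mkQ H) = H := by
          rw [Submodule.map_comap_eq_of_surjective (Submodule.mkQ_surjective U)]
        rw [hmc] at e
        rw [← e.finrank_eq, h1]
      · intro h
        exact h2 (by simpa [hvb] using h)
      · intro x hx
        simp only [Submodule.mem_comap, Submodule.mkQ_apply]
        rw [Submodule.Quotient.mk_eq_zero U |>.mpr hx]
        exact H.zero_mem
    · rintro ⟨H, h1, h2, h3⟩
      refine Subtype.ext ?_
      show Submodule.comap U.mkQ (Submodule.map U.mkQ H) = H
      rw [Submodule.comap_map_eq, Submodule.ker_mkQ, sup_eq_left.mpr h3]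
    · rintro ⟨H, h1, h2⟩
      refine Subtype.ext ?_
      show Submodule.map U.mkQ (Submodule.comap U.mkQ H) = H
      rw [Submodule.map_comap_eq_of_surjective (Submodule.mkQ_surjective U)]
  have hfinF : Finite F := by
    have : Finite (GaloisField p s) := Module.finite_of_finite (ZMod p)
    exact this
  rw [hbij, hyp_count F (V ⧸ U) vb hvb0, hyp_count F V v hv]
  rw [← pow_add]
  congr 1
  have hsum : Module.finrank F (V ⧸ U) + Module.finrank F U = Module.finrank F V :=
    Submodule.finrank_quotient_add_finrank U
  have hpos : 0 < Module.finrank F (V ⧸ U) := by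
    have : Nontrivial (V ⧸ U) := nontrivial_of_ne vb 0 hvb0
    exact Module.finrank_pos
  have hrfl : Module.finrank (GaloisField p s) ↥U = Module.finrank F ↥U := rfl
  rw [hrfl]
  omega
end

section
/- Let q be a prime power and define a_1 = 1 and a_k = 1 − ∑_{i=1}^{k−1} a_i · [k choose i]_q for k ≥ 2, where [k choose i]_q is the Gaussian binomial coefficient. Then |a_k| ≤ q^{2k²} for all k ≥ 1. Moreover, for any finite-dimensional F_q-vector space V' with 1 ≤ dim(V') ≤ d, we have ∑_{i=1}^{d} a_i · [dim(V') choose i]_q = 1. -/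
open Finset Module

section Aux

variable {K : Type*} [Field K] {M : Type*} [AddCommGroup M] [Module K M]

lemma card_subspaces_congr {M' : Type*} [AddCommGroup M'] [Module K M'] (e : M ≃ₗ[K] M')
    (i : ℕ) :
    Nat.card {P : Submodule K M // finrank K P = i} =
      Nat.card {P : Submodule K M' // finrank K P = i} := by
  apply Nat.card_congr
  refine Equiv.subtypeEquiv (Submodule.orderIsoMapComap e).toEquiv (fun P => ?_)
  have hfr : finrank K ((Submodule.orderIsoMapComap e).toEquiv P) = finrank K P :=
    (e.submoduleMap P).finrank_eq.symm
  rw [hfr]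

lemma key_sigma [Finite K] [Finite M] (i : ℕ) :
    Nat.card {P : Submodule K M // finrank K P = i} *
        ∏ j : Fin i, (Nat.card K ^ i - Nat.card K ^ (j : ℕ)) =
      Nat.card {s : Fin i → M // LinearIndependent K s} := by
  classical
  haveI : Finite (Submodule K M) :=
    Finite.of_injective (SetLike.coe : Submodule K M → Set M) SetLike.coe_injective
  haveI : Module.Finite K M := Module.Finite.of_finite
  set f : (Σ P : {P : Submodule K M // finrank K P = i},
      {s : Fin i → (P.1 : Submodule K M) // LinearIndependent K s}) →
      {s : Fin i → M // LinearIndependent K s} :=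
    fun x => ⟨fun j => (x.2.1 j : M), x.2.2.map' x.1.1.subtype (Submodule.ker_subtype _)⟩
    with hf
  have hspan : ∀ x, Submodule.span K (Set.range (f x).1) = (x.1 : Submodule K M) := by
    rintro ⟨⟨P, hP⟩, t, ht⟩
    have h1 : Submodule.span K (Set.range t) = ⊤ :=
      ht.span_eq_top_of_card_eq_finrank' (by simp [hP])
    show Submodule.span K (Set.range (⇑P.subtype ∘ t)) = P
    rw [Set.range_comp, Submodule.span_image, h1, Submodule.map_top,
      Submodule.range_subtype]
  have hbij : Function.Bijective f := by
    constructor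
    · rintro ⟨⟨P, hP⟩, t, ht⟩ ⟨⟨Q, hQ⟩, u, hu⟩ h
      obtain rfl : P = Q := by
        have h1 : Submodule.span K (Set.range (f ⟨⟨P, hP⟩, t, ht⟩).1) = P :=
          hspan ⟨⟨P, hP⟩, t, ht⟩
        have h2 : Submodule.span K (Set.range (f ⟨⟨Q, hQ⟩, u, hu⟩).1) = Q :=
          hspan ⟨⟨Q, hQ⟩, u, hu⟩
        rw [← h1, ← h2, h]
      exact Sigma.ext rfl (heq_of_eq (Subtype.ext (funext fun j =>
        Subtype.ext (congrFun (congrArg Subtype.val h) j))))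
    · rintro ⟨s, hs⟩
      exact ⟨⟨⟨Submodule.span K (Set.range s),
        by rw [finrank_span_eq_card hs, Fintype.card_fin]⟩,
        fun j => ⟨s j, Submodule.subset_span ⟨j, rfl⟩⟩,
        LinearIndependent.of_comp (Submodule.span K (Set.range s)).subtype hs⟩, rfl⟩
  haveI : ∀ P : {P : Submodule K M // finrank K P = i},
      Fintype {s : Fin i → (P.1 : Submodule K M) // LinearIndependent K s} :=
    fun P => Fintype.ofFinite _
  haveI : Fintype {P : Submodule K M // finrank K P = i} := Fintype.ofFinite _
  haveI : Fintype K := Fintype.ofFinite K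
  have hfib : ∀ P : {P : Submodule K M // finrank K P = i},
      Fintype.card {s : Fin i → (P.1 : Submodule K M) // LinearIndependent K s} =
        ∏ j : Fin i, (Nat.card K ^ i - Nat.card K ^ (j : ℕ)) := by
    intro P
    rw [← Nat.card_eq_fintype_card, card_linearIndependent (K := K) (by rw [P.2]),
      Nat.card_eq_fintype_card]
    simp [P.2]
  calc Nat.card {P : Submodule K M // finrank K P = i} *
        ∏ j : Fin i, (Nat.card K ^ i - Nat.card K ^ (j : ℕ))
      = Nat.card (Σ P : {P : Submodule K M // finrank K P = i},
          {s : Fin i → (P.1 : Submodule K M) // LinearIndependent K s}) := by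
        rw [Nat.card_eq_fintype_card (α := Σ P : {P : Submodule K M // finrank K P = i},
          {s : Fin i → (P.1 : Submodule K M) // LinearIndependent K s}), Fintype.card_sigma,
          Finset.sum_congr rfl (fun P _ => hfib P), Finset.sum_const, Finset.card_univ,
          smul_eq_mul, Nat.card_eq_fintype_card]
    _ = Nat.card {s : Fin i → M // LinearIndependent K s} :=
        Nat.card_congr (Equiv.ofBijective f hbij)

lemma card_subspaces_le [Finite K] [Finite M] {i k : ℕ} (hk : finrank K M = k) (hik : i ≤ k) :
    Nat.card {P : Submodule K M // finrank K P = i} ≤ Nat.card K ^ (i * (k - i + 1)) := by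
  classical
  have hq2 : 2 ≤ Nat.card K := by
    haveI : Fintype K := Fintype.ofFinite K
    rw [Nat.card_eq_fintype_card]; exact Fintype.one_lt_card
  have hM : Nat.card M = Nat.card K ^ k := by
    haveI : Fintype M := Fintype.ofFinite M
    haveI : Fintype K := Fintype.ofFinite K
    rw [Nat.card_eq_fintype_card, Nat.card_eq_fintype_card,
      card_eq_pow_finrank (K := K) (V := M), hk]
  have hsub : Nat.card {s : Fin i → M // LinearIndependent K s} ≤ Nat.card K ^ (k * i) := by
    calc Nat.card {s : Fin i → M // LinearIndependent K s}
        ≤ Nat.card (Fin i → M) := Finite.card_subtype_le _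
      _ = Nat.card K ^ (k * i) := by
          rw [Nat.card_fun, hM, Nat.card_eq_fintype_card (α := Fin i), Fintype.card_fin, ← pow_mul]
  have hprod : Nat.card K ^ (i * (i - 1)) ≤
      ∏ j : Fin i, (Nat.card K ^ i - Nat.card K ^ (j : ℕ)) := by
    have h1 : ∀ j : Fin i, Nat.card K ^ (i - 1) ≤ Nat.card K ^ i - Nat.card K ^ (j : ℕ) := by
      intro j
      have hi : 0 < i := j.pos
      have hj : Nat.card K ^ (j : ℕ) ≤ Nat.card K ^ (i - 1) :=
        Nat.pow_le_pow_right (by omega) (by omega)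
      have h2 : 2 * Nat.card K ^ (i - 1) ≤ Nat.card K ^ i := by
        have hii : Nat.card K ^ i = Nat.card K ^ (i - 1) * Nat.card K := by
          rw [← pow_succ]; congr 1; omega
        rw [hii]
        calc 2 * Nat.card K ^ (i - 1) = Nat.card K ^ (i - 1) * 2 := by ring
          _ ≤ Nat.card K ^ (i - 1) * Nat.card K := Nat.mul_le_mul_left _ hq2
      omega
    calc Nat.card K ^ (i * (i - 1)) = ∏ _j : Fin i, Nat.card K ^ (i - 1) := by
          rw [Finset.prod_const, Finset.card_univ, Fintype.card_fin, ← pow_mul, mul_comm]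
      _ ≤ ∏ j : Fin i, (Nat.card K ^ i - Nat.card K ^ (j : ℕ)) :=
          Finset.prod_le_prod' (fun j _ => h1 j)
  have hkey := key_sigma (K := K) (M := M) i
  have hmain : Nat.card {P : Submodule K M // finrank K P = i} * Nat.card K ^ (i * (i - 1)) ≤
      Nat.card K ^ (i * (k - i + 1)) * Nat.card K ^ (i * (i - 1)) := by
    calc Nat.card {P : Submodule K M // finrank K P = i} * Nat.card K ^ (i * (i - 1))
        ≤ Nat.card {P : Submodule K M // finrank K P = i} *
            ∏ j : Fin i, (Nat.card K ^ i - Nat.card K ^ (j : ℕ)) := Nat.mul_le_mul_left _ hprod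
      _ = Nat.card {s : Fin i → M // LinearIndependent K s} := hkey
      _ ≤ Nat.card K ^ (k * i) := hsub
      _ = Nat.card K ^ (i * (k - i + 1)) * Nat.card K ^ (i * (i - 1)) := by
          rw [← pow_add]; congr 1
          rcases Nat.eq_zero_or_pos i with rfl | hi
          · simp
          · have h3 : (k - i + 1) + (i - 1) = k := by omega
            rw [← Nat.mul_add, h3, mul_comm]
  exact Nat.le_of_mul_le_mul_right hmain (Nat.pow_pos (by omega))

end Aux


/-- The number of `i`-dimensional subspaces of an `F_q`-vector space `M`; for
`M = F_q^k` this is the Gaussian binomial coefficient `[k choose i]_q`. -/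
noncomputable def numSub (p s : ℕ) [Fact p.Prime] (M : Type*) [AddCommGroup M]
    [Module (GaloisField p s) M] (i : ℕ) : ℕ :=
  Nat.card {P : Submodule (GaloisField p s) M // Module.finrank (GaloisField p s) P = i}

/-- the inclusion–exclusion coefficients `a_k` satisfy `|a_k| ≤ q^{2k²}`,
and `∑_{i=1}^d a_i · [dim V' choose i]_q = 1` for `1 ≤ dim V' ≤ d`. -/
theorem stmt18 (p s : ℕ) [Fact p.Prime] (hs : s ≠ 0) (a : ℕ → ℤ)
    (ha1 : a 1 = 1)
    (hrec : ∀ k, 2 ≤ k →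
      a k = 1 - ∑ i ∈ Finset.Ico 1 k,
        a i * (numSub p s (Fin k → GaloisField p s) i : ℤ)) :
    (∀ k, 1 ≤ k → |a k| ≤ (Nat.card (GaloisField p s) : ℤ) ^ (2 * k ^ 2)) ∧
    (∀ (V' : Type) [AddCommGroup V'] [Module (GaloisField p s) V']
        [FiniteDimensional (GaloisField p s) V'] (d : ℕ),
      1 ≤ Module.finrank (GaloisField p s) V' →
      Module.finrank (GaloisField p s) V' ≤ d →
      ∑ i ∈ Finset.Icc 1 d, a i * (numSub p s V' i : ℤ) = 1) := by
  have hq2 : 2 ≤ Nat.card (GaloisField p s) := by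
    haveI : Fintype (GaloisField p s) := Fintype.ofFinite _
    rw [Nat.card_eq_fintype_card]; exact Fintype.one_lt_card
  have hq1 : (1 : ℤ) ≤ (Nat.card (GaloisField p s) : ℤ) := by exact_mod_cast (by omega : 1 ≤ Nat.card (GaloisField p s))
  constructor
  · -- Part 1: the bound
    intro k
    induction k using Nat.strong_induction_on with
    | _ k ih =>
      intro hk1
      rcases eq_or_lt_of_le hk1 with h | hk2
      · rw [← h, ha1, abs_one]
        exact one_le_pow₀ hq1
      · -- 2 ≤ k
        have hNS : ∀ i, i ∈ Finset.Ico 1 k →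
            (numSub p s (Fin k → GaloisField p s) i : ℤ) ≤
              (Nat.card (GaloisField p s) : ℤ) ^ (i * (k - i + 1)) := by
          intro i hi
          rw [Finset.mem_Ico] at hi
          have hfr : finrank (GaloisField p s) (Fin k → GaloisField p s) = k := by
            simp [Module.finrank_fintype_fun_eq_card]
          have := card_subspaces_le (K := GaloisField p s) hfr (le_of_lt hi.2) (i := i)
          exact_mod_cast this
        have hexp : ∀ i, i ∈ Finset.Ico 1 k →
            2 * i ^ 2 + i * (k - i + 1) ≤ 2 * k ^ 2 - 2 * k := by
          intro i hi
          rw [Finset.mem_Ico] at hi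
          obtain ⟨j, rfl⟩ : ∃ j, k = i + j := ⟨k - i, by omega⟩
          have hj : 1 ≤ j := by omega
          have h4 : i + j - i + 1 = j + 1 := by omega
          rw [h4]
          have h5 : 2 * i ^ 2 + i * (j + 1) + 2 * (i + j) ≤ 2 * (i + j) ^ 2 := by nlinarith [hi.1]
          omega
        have hterm : ∀ i ∈ Finset.Ico 1 k,
            |a i| * (numSub p s (Fin k → GaloisField p s) i : ℤ) ≤
              (Nat.card (GaloisField p s) : ℤ) ^ (2 * k ^ 2 - 2 * k) := by
          intro i hi
          have hmem := Finset.mem_Ico.mp hi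
          have h1 : |a i| ≤ (Nat.card (GaloisField p s) : ℤ) ^ (2 * i ^ 2) :=
            ih i hmem.2 hmem.1
          have h2 := hNS i hi
          calc |a i| * (numSub p s (Fin k → GaloisField p s) i : ℤ)
              ≤ (Nat.card (GaloisField p s) : ℤ) ^ (2 * i ^ 2) *
                (Nat.card (GaloisField p s) : ℤ) ^ (i * (k - i + 1)) :=
                mul_le_mul h1 h2 (by positivity) (by positivity)
            _ = (Nat.card (GaloisField p s) : ℤ) ^ (2 * i ^ 2 + i * (k - i + 1)) := by
                rw [pow_add]
            _ ≤ (Nat.card (GaloisField p s) : ℤ) ^ (2 * k ^ 2 - 2 * k) :=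
                pow_le_pow_right₀ hq1 (hexp i hi)
        have habs : |a k| ≤ 1 + ∑ i ∈ Finset.Ico 1 k,
            |a i| * (numSub p s (Fin k → GaloisField p s) i : ℤ) := by
          rw [hrec k hk2, sub_eq_add_neg]
          calc |1 + -∑ i ∈ Finset.Ico 1 k, a i * (numSub p s (Fin k → GaloisField p s) i : ℤ)|
              ≤ |(1:ℤ)| + |-∑ i ∈ Finset.Ico 1 k, a i * (numSub p s (Fin k → GaloisField p s) i : ℤ)| :=
                abs_add_le _ _
            _ ≤ 1 + ∑ i ∈ Finset.Ico 1 k, |a i| * (numSub p s (Fin k → GaloisField p s) i : ℤ) := by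
                rw [abs_one, abs_neg]
                refine add_le_add_right ((Finset.abs_sum_le_sum_abs _ _).trans ?_) 1
                refine Finset.sum_le_sum (fun i _ => ?_)
                rw [abs_mul, Nat.abs_cast]
        have hsum : ∑ i ∈ Finset.Ico 1 k,
            |a i| * (numSub p s (Fin k → GaloisField p s) i : ℤ) ≤
              (k - 1 : ℕ) * (Nat.card (GaloisField p s) : ℤ) ^ (2 * k ^ 2 - 2 * k) := by
          have := Finset.sum_le_card_nsmul (Finset.Ico 1 k) _ _ hterm
          rwa [Nat.card_Ico, nsmul_eq_mul] at this
        have hk2pow : (k : ℤ) ≤ (Nat.card (GaloisField p s) : ℤ) ^ (2 * k) := by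
          have h1 : k ≤ 2 ^ (2 * k) := le_of_lt ((Nat.lt_two_pow_self (n := k)).trans_le
            (Nat.pow_le_pow_right (by omega) (by omega)))
          have h2 : (2:ℕ) ^ (2 * k) ≤ Nat.card (GaloisField p s) ^ (2 * k) :=
            Nat.pow_le_pow_left hq2 _
          exact_mod_cast h1.trans h2
        calc |a k| ≤ 1 + ∑ i ∈ Finset.Ico 1 k,
              |a i| * (numSub p s (Fin k → GaloisField p s) i : ℤ) := habs
          _ ≤ 1 + (k - 1 : ℕ) * (Nat.card (GaloisField p s) : ℤ) ^ (2 * k ^ 2 - 2 * k) :=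
              add_le_add_right hsum 1
          _ ≤ (k : ℤ) * (Nat.card (GaloisField p s) : ℤ) ^ (2 * k ^ 2 - 2 * k) := by
              have h1 : (1:ℤ) ≤ (Nat.card (GaloisField p s) : ℤ) ^ (2 * k ^ 2 - 2 * k) :=
                one_le_pow₀ hq1
              have h2 : ((k - 1 : ℕ) : ℤ) + 1 = (k : ℤ) := by
                have : 1 ≤ k := hk1
                push_cast [Nat.cast_sub this]
                ring
              nlinarith
          _ ≤ (Nat.card (GaloisField p s) : ℤ) ^ (2 * k) *
                (Nat.card (GaloisField p s) : ℤ) ^ (2 * k ^ 2 - 2 * k) := by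
              have h1 : (0:ℤ) < (Nat.card (GaloisField p s) : ℤ) ^ (2 * k ^ 2 - 2 * k) := by
                positivity
              exact mul_le_mul_of_nonneg_right hk2pow (le_of_lt h1)
          _ = (Nat.card (GaloisField p s) : ℤ) ^ (2 * k ^ 2) := by
              rw [← pow_add]
              congr 1
              have : 2 * k ≤ 2 * k ^ 2 := by nlinarith
              omega
  · -- Part 2
    intro V' _ _ _ d h1 hd
    have hvan : ∀ i, finrank (GaloisField p s) V' < i → numSub p s V' i = 0 := by
      intro i hi
      haveI : IsEmpty {P : Submodule (GaloisField p s) V' //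
          finrank (GaloisField p s) P = i} := by
        refine ⟨fun P => ?_⟩
        have h2 := P.2
        have h3 := P.1.finrank_le
        omega
      exact Nat.card_of_isEmpty
    have htop : numSub p s V' (finrank (GaloisField p s) V') = 1 := by
      haveI : Nonempty {P : Submodule (GaloisField p s) V' //
          finrank (GaloisField p s) P = finrank (GaloisField p s) V'} :=
        ⟨⟨⊤, finrank_top _ _⟩⟩
      haveI : Subsingleton {P : Submodule (GaloisField p s) V' //
          finrank (GaloisField p s) P = finrank (GaloisField p s) V'} := by
        refine ⟨fun P Q => Subtype.ext ?_⟩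
        rw [Submodule.eq_top_of_finrank_eq P.2, Submodule.eq_top_of_finrank_eq Q.2]
      exact Nat.card_unique
    rcases eq_or_lt_of_le h1 with hn1 | hn2
    · -- finrank V' = 1
      rw [Finset.sum_eq_single_of_mem 1 (Finset.mem_Icc.2 ⟨le_refl 1, le_trans h1 hd⟩)]
      · have htop1 := htop
        rw [← hn1] at htop1
        rw [ha1, one_mul, htop1]
        norm_num
      · intro i hi hne
        have : finrank (GaloisField p s) V' < i := by
          have := Finset.mem_Icc.mp hi
          omega
        rw [hvan i this]
        norm_num
    · -- 2 ≤ finrank V'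
      have hcongr : ∀ i, numSub p s V' i =
          numSub p s (Fin (finrank (GaloisField p s) V') → GaloisField p s) i := by
        intro i
        exact card_subspaces_congr (Module.finBasis (GaloisField p s) V').equivFun i
      have hIccIoc : ∀ m : ℕ, Finset.Icc 1 m = Finset.Ioc 0 m := by
        intro m; ext x; rw [Finset.mem_Icc, Finset.mem_Ioc]; omega
      have hdisj : Disjoint (Finset.Ioc 0 (finrank (GaloisField p s) V'))
          (Finset.Ioc (finrank (GaloisField p s) V') d) := by
        rw [Finset.disjoint_left]
        intro x hx hx'
        rw [Finset.mem_Ioc] at hx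
        rw [Finset.mem_Ioc] at hx'
        omega
      rw [hIccIoc d, ← Finset.Ioc_union_Ioc_eq_Ioc (Nat.zero_le _) hd,
        Finset.sum_union hdisj, ← hIccIoc (finrank (GaloisField p s) V')]
      have hzero : ∑ i ∈ Finset.Ioc (finrank (GaloisField p s) V') d,
          a i * (numSub p s V' i : ℤ) = 0 := by
        refine Finset.sum_eq_zero (fun i hi => ?_)
        rw [hvan i (Finset.mem_Ioc.mp hi).1]
        norm_num
      rw [hzero, add_zero, ← Finset.Ico_add_one_right_eq_Icc,
        Finset.sum_Ico_succ_top (by omega : 1 ≤ finrank (GaloisField p s) V'), htop]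
      have hIco : ∑ i ∈ Finset.Ico 1 (finrank (GaloisField p s) V'),
          a i * (numSub p s V' i : ℤ) =
          ∑ i ∈ Finset.Ico 1 (finrank (GaloisField p s) V'),
          a i * (numSub p s (Fin (finrank (GaloisField p s) V') → GaloisField p s) i : ℤ) :=
        Finset.sum_congr rfl (fun i _ => by rw [hcongr i])
      rw [hIco, hrec _ hn2]
      push_cast
      ring
end

section
/- Let q be a prime power, V, W finite-dimensional F_q-vector spaces, X, Y, Z ∈ L(W,V) with Y + Z = X. Then at least one of the following holds: (1) Im(Y) ∩ Im(Z) ∩ Im(X) ≠ {0}; (2) ker(Y) + ker(Z) + ker(X) ≠ W; (3) there exist Y' ≤ Y and Z' ≤ Z with Y' + Z' = X and rank(X) = rank(Y') + rank(Z'). -/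
open LinearMap Module

open LinearMap Module

theorem aux19 {F : Type*} [Field F] {V W : Type*} [AddCommGroup V] [Module F V]
    [FiniteDimensional F V] [AddCommGroup W] [Module F W] [FiniteDimensional F W]
    (X Y Z : W →ₗ[F] V) (h : Y + Z = X)
    (h1 : LinearMap.range Y ⊓ LinearMap.range Z ⊓ LinearMap.range X = ⊥)
    (h2 : LinearMap.ker Y ⊔ LinearMap.ker Z ⊔ LinearMap.ker X = ⊤) :
    ∃ Y' Z' : W →ₗ[F] V,
      (Module.finrank F (LinearMap.range Y) =
        Module.finrank F (LinearMap.range Y') + Module.finrank F (LinearMap.range (Y - Y'))) ∧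
      (Module.finrank F (LinearMap.range Z) =
        Module.finrank F (LinearMap.range Z') + Module.finrank F (LinearMap.range (Z - Z'))) ∧
      Y' + Z' = X ∧
      Module.finrank F (LinearMap.range X) =
        Module.finrank F (LinearMap.range Y') + Module.finrank F (LinearMap.range Z') := by
  classical
  have hXYZ : ∀ w, X w = Y w + Z w := by
    intro w; rw [← h]; rfl
  have htriple : ∀ v : V, v ∈ LinearMap.range Y → v ∈ LinearMap.range Z →
      v ∈ LinearMap.range X → v = 0 := by
    intro v hy hz hx
    have : v ∈ (⊥ : Submodule F V) := h1 ▸ ⟨⟨hy, hz⟩, hx⟩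
    simpa using this
  set K : Submodule F W := LinearMap.ker Y ⊔ LinearMap.ker X with hKdef
  -- X vanishes on K ⊓ ker Z
  have hXvan : ∀ w, w ∈ K → w ∈ LinearMap.ker Z → X w = 0 := by
    intro w hwK hwZ
    obtain ⟨a, ha, c, hc, rfl⟩ := Submodule.mem_sup.mp hwK
    have ha' : Y a = 0 := LinearMap.mem_ker.mp ha
    have hc' : X c = 0 := LinearMap.mem_ker.mp hc
    have hz' : Z (a + c) = 0 := LinearMap.mem_ker.mp hwZ
    have e1 : X (a + c) = Z a := by
      rw [map_add, hc', add_zero, hXYZ, ha', zero_add]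
    have e2 : X (a + c) = Y (a + c) := by
      rw [hXYZ, hz', add_zero]
    exact htriple _ (e2 ▸ ⟨a + c, rfl⟩) (e1 ▸ ⟨a, rfl⟩) ⟨a + c, rfl⟩
  -- complement U of K ⊓ ker Z inside ker Z
  obtain ⟨U₀, hU₀⟩ := Submodule.exists_isCompl
    ((K ⊓ LinearMap.ker Z).comap (LinearMap.ker Z).subtype)
  set U : Submodule F W := U₀.map (LinearMap.ker Z).subtype with hUdef
  have hUZ : U ≤ LinearMap.ker Z := by
    rintro x ⟨⟨y, hy⟩, _, rfl⟩; exact hy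
  have hcompl : IsCompl K U := by
    constructor
    · rw [disjoint_iff]
      rw [eq_bot_iff]
      rintro x ⟨hxK, hxU⟩
      obtain ⟨x₀, hx₀, rfl⟩ := hxU
      have : x₀ ∈ (K ⊓ LinearMap.ker Z).comap (LinearMap.ker Z).subtype ⊓ U₀ := by
        exact ⟨⟨hxK, x₀.2⟩, hx₀⟩
      rw [hU₀.inf_eq_bot] at this
      have hx0 : x₀ = 0 := (Submodule.mem_bot F).mp this
      simp [hx0]
    · rw [codisjoint_iff, eq_top_iff]
      have hker : LinearMap.ker Z ≤ K ⊔ U := by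
        intro x hx
        have : (⟨x, hx⟩ : LinearMap.ker Z) ∈
            ((K ⊓ LinearMap.ker Z).comap (LinearMap.ker Z).subtype) ⊔ U₀ := by
          rw [hU₀.sup_eq_top]; trivial
        obtain ⟨a, ha, b, hb, hab⟩ := Submodule.mem_sup.mp this
        have : x = (a : W) + (b : W) := by
          have := congrArg (Subtype.val) hab; simpa using this.symm
        rw [this]
        exact Submodule.add_mem _ (Submodule.mem_sup_left ha.1)
          (Submodule.mem_sup_right (Submodule.mem_map_of_mem hb))
      calc (⊤ : Submodule F W) = LinearMap.ker Y ⊔ LinearMap.ker Z ⊔ LinearMap.ker X :=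
            h2.symm
        _ ≤ K ⊔ U := by
            rw [hKdef]
            apply sup_le (sup_le _ _) _
            · exact le_trans le_sup_left le_sup_left
            · exact le_trans hker le_rfl
            · exact le_trans le_sup_right le_sup_left
  set π : W →ₗ[F] U := U.linearProjOfIsCompl K hcompl.symm with hπdef
  have hπU : ∀ u : U, π (u : W) = u := fun u => Submodule.linearProjOfIsCompl_apply_left _ u
  have hπK : ∀ k ∈ K, π k = 0 := fun k hk =>
    Submodule.projectionOnto_apply_of_mem_right _ hk
  have hdecomp : ∀ w : W, w - (π w : W) ∈ K := by
    intro w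
    have : π (w - (π w : W)) = 0 := by
      rw [map_sub, hπU, sub_self]
    simpa using (Submodule.linearProjOfIsCompl_apply_eq_zero_iff hcompl.symm).mp this
  set Y' : W →ₗ[F] V := X ∘ₗ (U.subtype ∘ₗ π) with hY'def
  set Z' : W →ₗ[F] V := X - Y' with hZ'def
  have hY'apply : ∀ w, Y' w = X (π w : W) := fun w => rfl
  have hY'K : ∀ k ∈ K, Y' k = 0 := by
    intro k hk; rw [hY'apply, hπK k hk]; simp
  have hY'Z : ∀ b ∈ LinearMap.ker Z, Y' b = X b := by
    intro b hb
    have hk : b - (π b : W) ∈ K := hdecomp b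
    have hkz : b - (π b : W) ∈ LinearMap.ker Z :=
      Submodule.sub_mem _ hb (hUZ (π b).2)
    have : X (b - (π b : W)) = 0 := hXvan _ hk hkz
    rw [map_sub, sub_eq_zero] at this
    rw [hY'apply, this]
  -- range computations
  have hrY' : LinearMap.range Y' = (LinearMap.ker Z).map X := by
    apply le_antisymm
    · rintro v ⟨w, rfl⟩
      exact ⟨(π w : W), hUZ (π w).2, rfl⟩
    · rintro v ⟨b, hb, rfl⟩
      exact ⟨b, (hY'Z b hb)⟩
  have hrZ' : LinearMap.range Z' = (LinearMap.ker Y).map X := by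
    apply le_antisymm
    · rintro v ⟨w, rfl⟩
      have hk := hdecomp w
      obtain ⟨a, ha, c, hc, hac⟩ := Submodule.mem_sup.mp hk
      have hc' : X c = 0 := LinearMap.mem_ker.mp hc
      have : Z' w = X a := by
        have : Z' w = X (w - (π w : W)) := by
          rw [hZ'def]; simp [map_sub, hY'apply]
        rw [this, ← hac, map_add, hc', add_zero]
      exact this ▸ ⟨a, ha, rfl⟩
    · rintro v ⟨a, ha, rfl⟩
      have haK : a ∈ K := Submodule.mem_sup_left ha
      refine ⟨a, ?_⟩
      rw [hZ'def]; simp [hY'K a haK]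
  have hrD : LinearMap.range (Y - Y') = (LinearMap.ker X).map Y := by
    apply le_antisymm
    · rintro v ⟨w, rfl⟩
      have hw : w ∈ LinearMap.ker Y ⊔ LinearMap.ker Z ⊔ LinearMap.ker X := h2 ▸ trivial
      obtain ⟨ab, hab, c, hc, rfl⟩ := Submodule.mem_sup.mp hw
      obtain ⟨a, ha, b, hb, rfl⟩ := Submodule.mem_sup.mp hab
      have ha' : Y a = 0 := LinearMap.mem_ker.mp ha
      have hb' : Z b = 0 := LinearMap.mem_ker.mp hb
      have e : (Y - Y') (a + b + c) = Y c := by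
        have eYa : Y' a = 0 := hY'K a (Submodule.mem_sup_left ha)
        have eYb : Y' b = X b := hY'Z b hb
        have eYc : Y' c = 0 := hY'K c (Submodule.mem_sup_right hc)
        have eXb : X b = Y b := by rw [hXYZ, hb', add_zero]
        simp only [LinearMap.sub_apply, map_add, eYa, eYb, eYc, eXb, ha']
        abel
      exact e ▸ ⟨c, hc, rfl⟩
    · rintro v ⟨c, hc, rfl⟩
      refine ⟨c, ?_⟩
      have : Y' c = 0 := hY'K c (Submodule.mem_sup_right hc)
      simp [this]
  have hrD' : LinearMap.range (Z - Z') = (LinearMap.ker X).map Y := by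
    have : Z - Z' = -(Y - Y') := by
      rw [hZ'def, ← h]; abel
    rw [this, ← hrD]
    exact LinearMap.range_neg _
  -- map equalities
  have hmapYZ : (LinearMap.ker Z).map X = (LinearMap.ker Z).map Y := by
    apply le_antisymm <;> rintro v ⟨b, hb, rfl⟩
    · have : X b = Y b := by rw [hXYZ, LinearMap.mem_ker.mp hb, add_zero]
      exact this ▸ ⟨b, hb, rfl⟩
    · have : Y b = X b := by rw [hXYZ, LinearMap.mem_ker.mp hb, add_zero]
      exact this ▸ ⟨b, hb, rfl⟩
  have hmapYX : (LinearMap.ker Y).map X = (LinearMap.ker Y).map Z := by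
    apply le_antisymm <;> rintro v ⟨a, ha, rfl⟩
    · have : X a = Z a := by rw [hXYZ, LinearMap.mem_ker.mp ha, zero_add]
      exact this ▸ ⟨a, ha, rfl⟩
    · have : Z a = X a := by rw [hXYZ, LinearMap.mem_ker.mp ha, zero_add]
      exact this ▸ ⟨a, ha, rfl⟩
  have hmapZX : (LinearMap.ker X).map Y = (LinearMap.ker X).map Z := by
    apply le_antisymm <;> rintro v ⟨c, hc, rfl⟩
    · have hx : Y c + Z c = 0 := by rw [← hXYZ]; exact LinearMap.mem_ker.mp hc
      have e' : Y c = Z (-c) := by rw [map_neg]; exact eq_neg_of_add_eq_zero_left hx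
      exact e' ▸ ⟨-c, neg_mem hc, rfl⟩
    · have hx : Y c + Z c = 0 := by rw [← hXYZ]; exact LinearMap.mem_ker.mp hc
      have e' : Z c = Y (-c) := by rw [map_neg]; exact eq_neg_of_add_eq_zero_right hx
      exact e' ▸ ⟨-c, neg_mem hc, rfl⟩
  -- finrank helper
  have hfr : ∀ A B : Submodule F V, (∀ v, v ∈ A → v ∈ B → v = 0) →
      finrank F ↥(A ⊔ B) = finrank F A + finrank F B := by
    intro A B hAB
    have hinf : A ⊓ B = ⊥ := by
      rw [eq_bot_iff]; rintro v ⟨hva, hvb⟩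
      simpa using hAB v hva hvb
    have := Submodule.finrank_sup_add_finrank_inf_eq A B
    rw [hinf] at this
    simpa using this
  -- map of own kernel is bot
  have hmapbot : ∀ f : W →ₗ[F] V, (LinearMap.ker f).map f = ⊥ := by
    intro f
    rw [eq_bot_iff]
    rintro v ⟨c, hc, rfl⟩
    simpa using LinearMap.mem_ker.mp hc
  -- range decompositions
  have hsupY : LinearMap.range Y = (LinearMap.ker Z).map Y ⊔ (LinearMap.ker X).map Y := by
    rw [LinearMap.range_eq_map, ← h2, Submodule.map_sup, Submodule.map_sup, hmapbot Y,
      bot_sup_eq]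
  have hsupZ : LinearMap.range Z = (LinearMap.ker Y).map Z ⊔ (LinearMap.ker X).map Z := by
    have e : LinearMap.ker Y ⊔ LinearMap.ker Z ⊔ LinearMap.ker X
        = LinearMap.ker Z ⊔ (LinearMap.ker Y ⊔ LinearMap.ker X) := by
      rw [sup_comm (LinearMap.ker Y) (LinearMap.ker Z), sup_assoc]
    rw [LinearMap.range_eq_map, ← h2, e, Submodule.map_sup, Submodule.map_sup, hmapbot Z,
      bot_sup_eq]
  have hsupX : LinearMap.range X = (LinearMap.ker Z).map X ⊔ (LinearMap.ker Y).map X := by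
    have e : LinearMap.ker Y ⊔ LinearMap.ker Z ⊔ LinearMap.ker X
        = LinearMap.ker X ⊔ ((LinearMap.ker Z) ⊔ (LinearMap.ker Y)) := by
      rw [sup_comm (LinearMap.ker Y ⊔ LinearMap.ker Z) (LinearMap.ker X),
        sup_comm (LinearMap.ker Y) (LinearMap.ker Z)]
    rw [LinearMap.range_eq_map, ← h2, e, Submodule.map_sup, Submodule.map_sup, hmapbot X,
      bot_sup_eq]
  -- disjointness facts
  have DY : ∀ v, v ∈ (LinearMap.ker Z).map Y → v ∈ (LinearMap.ker X).map Y → v = 0 := by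
    rintro v ⟨b, hb, rfl⟩ hv2
    obtain ⟨c, hc, hcv⟩ := hv2
    have h1' : Y b = X b := by rw [hXYZ, LinearMap.mem_ker.mp hb, add_zero]
    have hx : Y c + Z c = 0 := by rw [← hXYZ]; exact LinearMap.mem_ker.mp hc
    have h2' : Y c = Z (-c) := by rw [map_neg]; exact eq_neg_of_add_eq_zero_left hx
    exact htriple _ ⟨b, rfl⟩ (hcv ▸ h2' ▸ ⟨-c, rfl⟩) (h1' ▸ ⟨b, rfl⟩)
  have DZ : ∀ v, v ∈ (LinearMap.ker Y).map Z → v ∈ (LinearMap.ker X).map Z → v = 0 := by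
    rintro v ⟨a, ha, rfl⟩ hv2
    obtain ⟨c, hc, hcv⟩ := hv2
    have h1' : Z a = X a := by rw [hXYZ, LinearMap.mem_ker.mp ha, zero_add]
    have hx : Y c + Z c = 0 := by rw [← hXYZ]; exact LinearMap.mem_ker.mp hc
    have h2' : Z c = Y (-c) := by rw [map_neg]; exact eq_neg_of_add_eq_zero_right hx
    exact htriple _ (hcv ▸ h2' ▸ ⟨-c, rfl⟩) ⟨a, rfl⟩ (h1' ▸ ⟨a, rfl⟩)
  have DX : ∀ v, v ∈ (LinearMap.ker Z).map X → v ∈ (LinearMap.ker Y).map X → v = 0 := by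
    rintro v ⟨b, hb, rfl⟩ hv2
    obtain ⟨a, ha, hav⟩ := hv2
    have h1' : X b = Y b := by rw [hXYZ, LinearMap.mem_ker.mp hb, add_zero]
    have h2' : X a = Z a := by rw [hXYZ, LinearMap.mem_ker.mp ha, zero_add]
    exact htriple _ (h1' ▸ ⟨b, rfl⟩) (hav ▸ h2' ▸ ⟨a, rfl⟩) ⟨b, rfl⟩
  refine ⟨Y', Z', ?_, ?_, ?_, ?_⟩
  · rw [hrY', hmapYZ, hrD, hsupY]
    exact hfr _ _ DY
  · rw [hrZ', hmapYX, hrD', hmapZX, hsupZ]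
    exact hfr _ _ DZ
  · rw [hZ'def]; abel
  · rw [hrY', hrZ', hsupX]
    exact hfr _ _ DX


/-- if `Y + Z = X` then either the images of `X, Y, Z` have a common
nonzero vector, or the kernels of `X, Y, Z` do not span `W`, or `X` splits as a direct
sum `Y' ⊕ Z'` with `Y' ≤ Y` and `Z' ≤ Z`. -/
theorem stmt19 (p s : ℕ) [Fact p.Prime] (hs : s ≠ 0)
    (V W : Type) [AddCommGroup V] [Module (GaloisField p s) V]
    [FiniteDimensional (GaloisField p s) V]
    [AddCommGroup W] [Module (GaloisField p s) W]
    [FiniteDimensional (GaloisField p s) W]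
    (X Y Z : W →ₗ[GaloisField p s] V) (h : Y + Z = X) :
    (LinearMap.range Y ⊓ LinearMap.range Z ⊓ LinearMap.range X ≠ ⊥) ∨
    (LinearMap.ker Y ⊔ LinearMap.ker Z ⊔ LinearMap.ker X ≠ ⊤) ∨
    (∃ Y' Z' : W →ₗ[GaloisField p s] V,
      rLE (GaloisField p s) Y' Y ∧ rLE (GaloisField p s) Z' Z ∧ Y' + Z' = X ∧
      Module.finrank (GaloisField p s) (LinearMap.range X) =
        Module.finrank (GaloisField p s) (LinearMap.range Y') +
          Module.finrank (GaloisField p s) (LinearMap.range Z')) := by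
  by_cases h1 : LinearMap.range Y ⊓ LinearMap.range Z ⊓ LinearMap.range X = ⊥
  swap
  · exact Or.inl h1
  by_cases h2 : LinearMap.ker Y ⊔ LinearMap.ker Z ⊔ LinearMap.ker X = ⊤
  swap
  · exact Or.inr (Or.inl h2)
  obtain ⟨Y', Z', hy, hz, hsum, hx⟩ := aux19 X Y Z h h1 h2
  exact Or.inr (Or.inr ⟨Y', Z', hy, hz, hsum, hx⟩)
end
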